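/- Countermodel construction: for every template P = (Γ*, Δ*) induced by a search tree, the determined model m_P with the identity valuation 𝔳 satisfies m_P,𝔳 ⊨ A for all A ∈ Γ* and m_P,𝔳 ⊭ B for all B ∈ Δ*. -/

import Mathlib

set_option maxHeartbeats 1000000

/-! ### Syntax of PDL -/

mutual
inductive PDLFormula : Type
  | bot : PDLFormula
  | atom : ℕ → PDLFormula
  | and : PDLFormula → PDLFormula → PDLFormula
  | or : PDLFormula → PDLFormula → PDLFormula
  | imp : PDLFormula → PDLFormula → PDLFormula
  | box : PDLProgram → PDLFormula → PDLFormula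
  deriving DecidableEq

inductive PDLProgram : Type
  | atom : ℕ → PDLProgram
  | comp : PDLProgram → PDLProgram → PDLProgram
  | choice : PDLProgram → PDLProgram → PDLProgram
  | test : PDLFormula → PDLProgram
  | star : PDLProgram → PDLProgram
  deriving DecidableEq
end

/-! ### Semantics of PDL -/

structure PDLModel where
  State : Type
  propI : ℕ → Set State
  progI : ℕ → Set (State × State)

mutual
def PDLFormula.sem (m : PDLModel) : PDLFormula → Set m.State
  | .bot => ∅
  | .atom p => m.propI p
  | .and φ ψ => PDLFormula.sem m φ ∩ PDLFormula.sem m ψ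
  | .or φ ψ => PDLFormula.sem m φ ∪ PDLFormula.sem m ψ
  | .imp φ ψ => (PDLFormula.sem m φ)ᶜ ∪ PDLFormula.sem m ψ
  | .box α φ => { s | ∀ t, (s, t) ∈ PDLProgram.sem m α → t ∈ PDLFormula.sem m φ }

def PDLProgram.sem (m : PDLModel) : PDLProgram → Set (m.State × m.State)
  | .atom a => m.progI a
  | .comp α β => { p | ∃ t, (p.1, t) ∈ PDLProgram.sem m α ∧ (t, p.2) ∈ PDLProgram.sem m β }
  | .choice α β => PDLProgram.sem m α ∪ PDLProgram.sem m β
  | .test φ => { p | p.1 = p.2 ∧ p.1 ∈ PDLFormula.sem m φ }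
  | .star α => { p | Relation.ReflTransGen (fun s t => (s, t) ∈ PDLProgram.sem m α) p.1 p.2 }
end

/-! ### Labelled sequents -/

abbrev Label := ℕ

inductive SeqElem : Type
  | rel : Label → ℕ → Label → SeqElem
  | lab : Label → PDLFormula → SeqElem
  deriving DecidableEq

structure Sequent where
  ant : Finset SeqElem
  suc : Finset SeqElem

def SeqElem.sat (m : PDLModel) (v : Label → m.State) : SeqElem → Prop
  | .rel x a y => (v x, v y) ∈ m.progI a
  | .lab x φ => v x ∈ PDLFormula.sem m φ

def Sequent.valid (S : Sequent) : Prop :=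
  ∀ (m : PDLModel) (v : Label → m.State),
    (∀ A ∈ S.ant, A.sat m v) → ∃ B ∈ S.suc, B.sat m v

def Sequent.falsifiedBy (S : Sequent) (m : PDLModel) (v : Label → m.State) : Prop :=
  (∀ A ∈ S.ant, A.sat m v) ∧ ∀ B ∈ S.suc, ¬ B.sat m v

/-! ### Labels, starred labels, reachability -/

def SeqElem.labels : SeqElem → Finset Label
  | .rel x _ y => {x, y}
  | .lab x _ => {x}

def labs (Γ : Finset SeqElem) : Finset Label := Γ.biUnion SeqElem.labels

def starred (Δ : Finset SeqElem) : Set Label :=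
  { x | ∃ α φ, SeqElem.lab x (PDLFormula.box (PDLProgram.star α) φ) ∈ Δ }

def relStep (Γ : Finset SeqElem) (x y : Label) : Prop := ∃ a, SeqElem.rel x a y ∈ Γ

/-- `x` reaches `y` through a (possibly empty) chain of relational atoms of `Γ`. -/
def reaches (Γ : Finset SeqElem) : Label → Label → Prop := Relation.ReflTransGen (relStep Γ)

/-- A set of relational atoms is acyclic when no label reaches itself via a nonempty chain. -/
def RelAcyclic (Γ : Finset SeqElem) : Prop := ∀ x, ¬ Relation.TransGen (relStep Γ) x x

def Sequent.Acyclic (S : Sequent) : Prop := RelAcyclic S.ant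

/-! ### Classification of formulas, normal sequents -/

def PDLFormula.isAtomic : PDLFormula → Prop
  | .bot => True
  | .atom _ => True
  | _ => False

def PDLFormula.isIterated : PDLFormula → Prop
  | .box (.star _) _ => True
  | _ => False

def SeqElem.isRel : SeqElem → Prop
  | .rel _ _ _ => True
  | _ => False

def NormalSeq (S : Sequent) : Prop :=
  (∀ A ∈ S.ant, A ∉ S.suc) ∧
  (∀ A ∈ S.suc, ∃ x φ, A = SeqElem.lab x φ ∧ (φ.isAtomic ∨ φ.isIterated)) ∧
  (∀ A ∈ S.ant, A.isRel ∨ ∃ x φ, A = SeqElem.lab x φ ∧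
      (φ.isAtomic ∨ ∃ a ψ, φ = PDLFormula.box (PDLProgram.atom a) ψ ∧
        ∀ y, SeqElem.rel x a y ∉ S.ant))

/-! ### Test-freeness and subformulas -/

mutual
def PDLFormula.TestFree : PDLFormula → Prop
  | .bot => True
  | .atom _ => True
  | .and φ ψ => PDLFormula.TestFree φ ∧ PDLFormula.TestFree ψ
  | .or φ ψ => PDLFormula.TestFree φ ∧ PDLFormula.TestFree ψ
  | .imp φ ψ => PDLFormula.TestFree φ ∧ PDLFormula.TestFree ψ
  | .box α φ => PDLProgram.TestFree α ∧ PDLFormula.TestFree φ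

def PDLProgram.TestFree : PDLProgram → Prop
  | .atom _ => True
  | .comp α β => PDLProgram.TestFree α ∧ PDLProgram.TestFree β
  | .choice α β => PDLProgram.TestFree α ∧ PDLProgram.TestFree β
  | .test _ => False
  | .star α => PDLProgram.TestFree α
end

def SeqElem.TestFree : SeqElem → Prop
  | .rel _ _ _ => True
  | .lab _ φ => φ.TestFree

def Sequent.TestFree (S : Sequent) : Prop :=
  (∀ A ∈ S.ant, A.TestFree) ∧ (∀ A ∈ S.suc, A.TestFree)

mutual
inductive Subf : PDLFormula → PDLFormula → Prop
  | refl (φ) : Subf φ φ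
  | andl {χ φ ψ} : Subf χ φ → Subf χ (PDLFormula.and φ ψ)
  | andr {χ φ ψ} : Subf χ ψ → Subf χ (PDLFormula.and φ ψ)
  | orl {χ φ ψ} : Subf χ φ → Subf χ (PDLFormula.or φ ψ)
  | orr {χ φ ψ} : Subf χ ψ → Subf χ (PDLFormula.or φ ψ)
  | impl {χ φ ψ} : Subf χ φ → Subf χ (PDLFormula.imp φ ψ)
  | impr {χ φ ψ} : Subf χ ψ → Subf χ (PDLFormula.imp φ ψ)
  | boxf {χ α φ} : Subf χ φ → Subf χ (PDLFormula.box α φ)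
  | boxp {χ α φ} : SubfP χ α → Subf χ (PDLFormula.box α φ)

inductive SubfP : PDLFormula → PDLProgram → Prop
  | compl {χ α β} : SubfP χ α → SubfP χ (PDLProgram.comp α β)
  | compr {χ α β} : SubfP χ β → SubfP χ (PDLProgram.comp α β)
  | choicel {χ α β} : SubfP χ α → SubfP χ (PDLProgram.choice α β)
  | choicer {χ α β} : SubfP χ β → SubfP χ (PDLProgram.choice α β)
  | test {χ φ} : Subf χ φ → SubfP χ (PDLProgram.test φ)
  | star {χ α} : SubfP χ α → SubfP χ (PDLProgram.star α)
end

/-! ### Label substitution -/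

def substLabel (x y z : Label) : Label := if z = x then y else z

def SeqElem.subst (x y : Label) : SeqElem → SeqElem
  | .rel z a w => .rel (substLabel x y z) a (substLabel x y w)
  | .lab z φ => .lab (substLabel x y z) φ
/-! ### Trace values -/

structure TraceValue where
  label : Label
  spine : List PDLProgram
  focus : PDLProgram
  formula : PDLFormula
  deriving DecidableEq

/-- The labelled formula `x : [α₁]…[αₙ][β*]φ` denoted by a trace value. -/
def TraceValue.toFormula (τ : TraceValue) : PDLFormula :=
  τ.spine.foldr PDLFormula.box (PDLFormula.box (PDLProgram.star τ.focus) τ.formula)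

def TraceValue.toElem (τ : TraceValue) : SeqElem := SeqElem.lab τ.label τ.toFormula

/-- `[γ]τ`: prepend a program to the spine of a trace value. -/
def TraceValue.push (γ : PDLProgram) (τ : TraceValue) : TraceValue :=
  ⟨τ.label, γ :: τ.spine, τ.focus, τ.formula⟩

/-! ### Rule applications of G3PDL -/

inductive RuleApp : Type
  | ax (A : SeqElem)
  | botL (x : Label)
  | wl (A : SeqElem) (Γ Δ : Finset SeqElem)
  | wr (A : SeqElem) (Γ Δ : Finset SeqElem)
  | andL (x : Label) (φ ψ : PDLFormula) (Γ Δ : Finset SeqElem)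
  | andR (x : Label) (φ ψ : PDLFormula) (Γ Δ : Finset SeqElem)
  | orL (x : Label) (φ ψ : PDLFormula) (Γ Δ : Finset SeqElem)
  | orR (x : Label) (φ ψ : PDLFormula) (Γ Δ : Finset SeqElem)
  | impL (x : Label) (φ ψ : PDLFormula) (Γ Δ : Finset SeqElem)
  | impR (x : Label) (φ ψ : PDLFormula) (Γ Δ : Finset SeqElem)
  | boxL (x : Label) (a : ℕ) (y : Label) (φ : PDLFormula) (Γ Δ : Finset SeqElem)
  | boxR (x : Label) (a : ℕ) (y : Label) (φ : PDLFormula) (Γ Δ : Finset SeqElem)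
  | compL (x : Label) (α β : PDLProgram) (φ : PDLFormula) (Γ Δ : Finset SeqElem)
  | compR (x : Label) (α β : PDLProgram) (φ : PDLFormula) (Γ Δ : Finset SeqElem)
  | choiceL (x : Label) (α β : PDLProgram) (φ : PDLFormula) (Γ Δ : Finset SeqElem)
  | choiceR (x : Label) (α β : PDLProgram) (φ : PDLFormula) (Γ Δ : Finset SeqElem)
  | testL (x : Label) (φ ψ : PDLFormula) (Γ Δ : Finset SeqElem)
  | testR (x : Label) (φ ψ : PDLFormula) (Γ Δ : Finset SeqElem)
  | starL (x : Label) (α : PDLProgram) (φ : PDLFormula) (Γ Δ : Finset SeqElem)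
  | starR (x : Label) (α : PDLProgram) (φ : PDLFormula) (Γ Δ : Finset SeqElem)
  | subst (x y : Label) (Γ Δ : Finset SeqElem)
  | cut (A : SeqElem) (Γ Δ Γ₂ Δ₂ : Finset SeqElem)
  deriving DecidableEq

namespace RuleApp

/-- Conclusion of a rule application. -/
def conc : RuleApp → Sequent
  | ax A => ⟨{A}, {A}⟩
  | botL x => ⟨{SeqElem.lab x PDLFormula.bot}, ∅⟩
  | wl A Γ Δ => ⟨insert A Γ, Δ⟩
  | wr A Γ Δ => ⟨Γ, insert A Δ⟩
  | andL x φ ψ Γ Δ => ⟨insert (SeqElem.lab x (PDLFormula.and φ ψ)) Γ, Δ⟩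
  | andR x φ ψ Γ Δ => ⟨Γ, insert (SeqElem.lab x (PDLFormula.and φ ψ)) Δ⟩
  | orL x φ ψ Γ Δ => ⟨insert (SeqElem.lab x (PDLFormula.or φ ψ)) Γ, Δ⟩
  | orR x φ ψ Γ Δ => ⟨Γ, insert (SeqElem.lab x (PDLFormula.or φ ψ)) Δ⟩
  | impL x φ ψ Γ Δ => ⟨insert (SeqElem.lab x (PDLFormula.imp φ ψ)) Γ, Δ⟩
  | impR x φ ψ Γ Δ => ⟨Γ, insert (SeqElem.lab x (PDLFormula.imp φ ψ)) Δ⟩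
  | boxL x a y φ Γ Δ =>
      ⟨insert (SeqElem.lab x (PDLFormula.box (PDLProgram.atom a) φ)) (insert (SeqElem.rel x a y) Γ), Δ⟩
  | boxR x a _ φ Γ Δ => ⟨Γ, insert (SeqElem.lab x (PDLFormula.box (PDLProgram.atom a) φ)) Δ⟩
  | compL x α β φ Γ Δ => ⟨insert (SeqElem.lab x (PDLFormula.box (PDLProgram.comp α β) φ)) Γ, Δ⟩
  | compR x α β φ Γ Δ => ⟨Γ, insert (SeqElem.lab x (PDLFormula.box (PDLProgram.comp α β) φ)) Δ⟩
  | choiceL x α β φ Γ Δ => ⟨insert (SeqElem.lab x (PDLFormula.box (PDLProgram.choice α β) φ)) Γ, Δ⟩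
  | choiceR x α β φ Γ Δ => ⟨Γ, insert (SeqElem.lab x (PDLFormula.box (PDLProgram.choice α β) φ)) Δ⟩
  | testL x φ ψ Γ Δ => ⟨insert (SeqElem.lab x (PDLFormula.box (PDLProgram.test φ) ψ)) Γ, Δ⟩
  | testR x φ ψ Γ Δ => ⟨Γ, insert (SeqElem.lab x (PDLFormula.box (PDLProgram.test φ) ψ)) Δ⟩
  | starL x α φ Γ Δ => ⟨insert (SeqElem.lab x (PDLFormula.box (PDLProgram.star α) φ)) Γ, Δ⟩
  | starR x α φ Γ Δ => ⟨Γ, insert (SeqElem.lab x (PDLFormula.box (PDLProgram.star α) φ)) Δ⟩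
  | subst x y Γ Δ => ⟨Γ.image (SeqElem.subst x y), Δ.image (SeqElem.subst x y)⟩
  | cut _ Γ Δ Γ₂ Δ₂ => ⟨Γ ∪ Γ₂, Δ ∪ Δ₂⟩

/-- Premises of a rule application. -/
def prems : RuleApp → List Sequent
  | ax _ => []
  | botL _ => []
  | wl _ Γ Δ => [⟨Γ, Δ⟩]
  | wr _ Γ Δ => [⟨Γ, Δ⟩]
  | andL x φ ψ Γ Δ => [⟨insert (SeqElem.lab x φ) (insert (SeqElem.lab x ψ) Γ), Δ⟩]
  | andR x φ ψ Γ Δ => [⟨Γ, insert (SeqElem.lab x φ) Δ⟩, ⟨Γ, insert (SeqElem.lab x ψ) Δ⟩]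
  | orL x φ ψ Γ Δ => [⟨insert (SeqElem.lab x φ) Γ, Δ⟩, ⟨insert (SeqElem.lab x ψ) Γ, Δ⟩]
  | orR x φ ψ Γ Δ => [⟨Γ, insert (SeqElem.lab x φ) (insert (SeqElem.lab x ψ) Δ)⟩]
  | impL x φ ψ Γ Δ => [⟨Γ, insert (SeqElem.lab x φ) Δ⟩, ⟨insert (SeqElem.lab x ψ) Γ, Δ⟩]
  | impR x φ ψ Γ Δ => [⟨insert (SeqElem.lab x φ) Γ, insert (SeqElem.lab x ψ) Δ⟩]
  | boxL _ _ y φ Γ Δ => [⟨insert (SeqElem.lab y φ) Γ, Δ⟩]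
  | boxR x a y φ Γ Δ => [⟨insert (SeqElem.rel x a y) Γ, insert (SeqElem.lab y φ) Δ⟩]
  | compL x α β φ Γ Δ => [⟨insert (SeqElem.lab x (PDLFormula.box α (PDLFormula.box β φ))) Γ, Δ⟩]
  | compR x α β φ Γ Δ => [⟨Γ, insert (SeqElem.lab x (PDLFormula.box α (PDLFormula.box β φ))) Δ⟩]
  | choiceL x α β φ Γ Δ =>
      [⟨insert (SeqElem.lab x (PDLFormula.box α φ)) (insert (SeqElem.lab x (PDLFormula.box β φ)) Γ), Δ⟩]
  | choiceR x α β φ Γ Δ =>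
      [⟨Γ, insert (SeqElem.lab x (PDLFormula.box α φ)) Δ⟩, ⟨Γ, insert (SeqElem.lab x (PDLFormula.box β φ)) Δ⟩]
  | testL x φ ψ Γ Δ => [⟨Γ, insert (SeqElem.lab x φ) Δ⟩, ⟨insert (SeqElem.lab x ψ) Γ, Δ⟩]
  | testR x φ ψ Γ Δ => [⟨insert (SeqElem.lab x φ) Γ, insert (SeqElem.lab x ψ) Δ⟩]
  | starL x α φ Γ Δ =>
      [⟨insert (SeqElem.lab x φ)
          (insert (SeqElem.lab x (PDLFormula.box α (PDLFormula.box (PDLProgram.star α) φ))) Γ), Δ⟩]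
  | starR x α φ Γ Δ =>
      [⟨Γ, insert (SeqElem.lab x φ) Δ⟩,
       ⟨Γ, insert (SeqElem.lab x (PDLFormula.box α (PDLFormula.box (PDLProgram.star α) φ))) Δ⟩]
  | subst _ _ Γ Δ => [⟨Γ, Δ⟩]
  | cut A Γ Δ Γ₂ Δ₂ => [⟨Γ, insert A Δ⟩, ⟨insert A Γ₂, Δ₂⟩]

/-- Side conditions: the fresh-label condition of (□R). -/
def wf : RuleApp → Prop
  | boxR x _ y _ Γ Δ => y ∉ labs Γ ∧ y ∉ labs Δ ∧ y ≠ x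
  | _ => True

/-- `(τ, τ')` is a trace pair for (conclusion, `i`-th premise) of the rule application. -/
def tracePair : RuleApp → ℕ → TraceValue → TraceValue → Prop
  | ax _, _, _, _ => False
  | botL _, _, _, _ => False
  | wl _ _ Δ, i, τ, τ' => i = 0 ∧ τ.toElem ∈ Δ ∧ τ' = τ
  | wr _ _ Δ, i, τ, τ' => i = 0 ∧ τ.toElem ∈ Δ ∧ τ' = τ
  | andL _ _ _ _ Δ, i, τ, τ' => i = 0 ∧ τ.toElem ∈ Δ ∧ τ' = τ
  | andR _ _ _ _ Δ, i, τ, τ' => i < 2 ∧ τ.toElem ∈ Δ ∧ τ' = τ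
  | orL _ _ _ _ Δ, i, τ, τ' => i < 2 ∧ τ.toElem ∈ Δ ∧ τ' = τ
  | orR _ _ _ _ Δ, i, τ, τ' => i = 0 ∧ τ.toElem ∈ Δ ∧ τ' = τ
  | impL _ _ _ _ Δ, i, τ, τ' => i < 2 ∧ τ.toElem ∈ Δ ∧ τ' = τ
  | impR _ _ _ _ Δ, i, τ, τ' => i = 0 ∧ τ.toElem ∈ Δ ∧ τ' = τ
  | boxL _ _ _ _ _ Δ, i, τ, τ' => i = 0 ∧ τ.toElem ∈ Δ ∧ τ' = τ
  | boxR x a y φ _ Δ, i, τ, τ' => i = 0 ∧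
      ((τ.toElem ∈ Δ ∧ τ' = τ) ∨
       (τ'.toElem = SeqElem.lab y φ ∧
        τ = ⟨x, PDLProgram.atom a :: τ'.spine, τ'.focus, τ'.formula⟩))
  | compL _ _ _ _ _ Δ, i, τ, τ' => i = 0 ∧ τ.toElem ∈ Δ ∧ τ' = τ
  | compR x α β φ _ Δ, i, τ, τ' => i = 0 ∧
      ((τ.toElem ∈ Δ ∧ τ' = τ) ∨
       (∃ σ : TraceValue, σ.toElem = SeqElem.lab x φ ∧
          τ = σ.push (PDLProgram.comp α β) ∧ τ' = (σ.push β).push α))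
  | choiceL _ _ _ _ _ Δ, i, τ, τ' => i = 0 ∧ τ.toElem ∈ Δ ∧ τ' = τ
  | choiceR x α β φ _ Δ, i, τ, τ' => i < 2 ∧
      ((τ.toElem ∈ Δ ∧ τ' = τ) ∨
       (∃ σ : TraceValue, σ.toElem = SeqElem.lab x φ ∧
          τ = σ.push (PDLProgram.choice α β) ∧ τ' = σ.push (if i = 0 then α else β)))
  | testL _ _ _ _ Δ, i, τ, τ' => i < 2 ∧ τ.toElem ∈ Δ ∧ τ' = τ
  | testR x φ ψ _ Δ, i, τ, τ' => i = 0 ∧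
      ((τ.toElem ∈ Δ ∧ τ' = τ) ∨
       (τ'.toElem = SeqElem.lab x ψ ∧ τ = τ'.push (PDLProgram.test φ)))
  | starL _ _ _ _ Δ, i, τ, τ' => i = 0 ∧ τ.toElem ∈ Δ ∧ τ' = τ
  | starR x α φ _ Δ, i, τ, τ' =>
      (i = 0 ∧ ((τ.toElem ∈ Δ ∧ τ' = τ) ∨
         (τ'.toElem = SeqElem.lab x φ ∧ τ = τ'.push (PDLProgram.star α)))) ∨
      (i = 1 ∧ ((τ.toElem ∈ Δ ∧ τ' = τ) ∨
         (τ.toElem = SeqElem.lab x (PDLFormula.box (PDLProgram.star α) φ) ∧ τ' = τ.push α)))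
  | subst x y _ Δ, i, τ, τ' => i = 0 ∧ τ'.toElem ∈ Δ ∧
      τ = ⟨substLabel x y τ'.label, τ'.spine, τ'.focus, τ'.formula⟩
  | cut _ _ Δ _ Δ₂, i, τ, τ' =>
      (i = 0 ∧ τ.toElem ∈ Δ ∧ τ' = τ) ∨ (i = 1 ∧ τ.toElem ∈ Δ₂ ∧ τ' = τ)

/-- Progressing trace pairs: the principal formula of a (∗R) right premise with empty spine. -/
def progressing : RuleApp → ℕ → TraceValue → TraceValue → Prop
  | starR x α φ _ _, i, τ, τ' => i = 1 ∧ τ = ⟨x, [], α, φ⟩ ∧ τ' = τ.push α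
  | _, _, _, _ => False

/-! #### Classification of rule applications -/

def isCut : RuleApp → Prop | cut _ _ _ _ _ => True | _ => False
def isSubst : RuleApp → Prop | subst _ _ _ _ => True | _ => False
def isWeak : RuleApp → Prop | wl _ _ _ => True | wr _ _ _ => True | _ => False

/-- Rules allowed when closing a leaf: weakenings, (Ax) and (⊥). -/
def isClosing : RuleApp → Prop
  | wl _ _ _ => True | wr _ _ _ => True | ax _ => True | botL _ => True | _ => False

/-- The logical rules: all rules except weakening, (Subst) and (Cut). -/
def isLogical : RuleApp → Prop
  | wl _ _ _ => False | wr _ _ _ => False | subst _ _ _ _ => False | cut _ _ _ _ _ => False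
  | _ => True

/-- The left logical rules. -/
def isLeftLogical : RuleApp → Prop
  | andL _ _ _ _ _ => True | orL _ _ _ _ _ => True | impL _ _ _ _ _ => True
  | boxL _ _ _ _ _ _ => True | compL _ _ _ _ _ _ => True | choiceL _ _ _ _ _ _ => True
  | testL _ _ _ _ _ => True | starL _ _ _ _ _ => True
  | _ => False

/-- The rule instance consumes its principal labelled formula (it does not also occur in the
context), and (for □L) preserves the relational atom. -/
def consumes : RuleApp → Prop
  | andL x φ ψ Γ _ => SeqElem.lab x (PDLFormula.and φ ψ) ∉ Γ
  | andR x φ ψ _ Δ => SeqElem.lab x (PDLFormula.and φ ψ) ∉ Δ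
  | orL x φ ψ Γ _ => SeqElem.lab x (PDLFormula.or φ ψ) ∉ Γ
  | orR x φ ψ _ Δ => SeqElem.lab x (PDLFormula.or φ ψ) ∉ Δ
  | impL x φ ψ Γ _ => SeqElem.lab x (PDLFormula.imp φ ψ) ∉ Γ
  | impR x φ ψ _ Δ => SeqElem.lab x (PDLFormula.imp φ ψ) ∉ Δ
  | boxL x a y φ Γ _ =>
      SeqElem.lab x (PDLFormula.box (PDLProgram.atom a) φ) ∉ Γ ∧ SeqElem.rel x a y ∈ Γ
  | boxR x a _ φ _ Δ => SeqElem.lab x (PDLFormula.box (PDLProgram.atom a) φ) ∉ Δ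
  | compL x α β φ Γ _ => SeqElem.lab x (PDLFormula.box (PDLProgram.comp α β) φ) ∉ Γ
  | compR x α β φ _ Δ => SeqElem.lab x (PDLFormula.box (PDLProgram.comp α β) φ) ∉ Δ
  | choiceL x α β φ Γ _ => SeqElem.lab x (PDLFormula.box (PDLProgram.choice α β) φ) ∉ Γ
  | choiceR x α β φ _ Δ => SeqElem.lab x (PDLFormula.box (PDLProgram.choice α β) φ) ∉ Δ
  | testL x φ ψ Γ _ => SeqElem.lab x (PDLFormula.box (PDLProgram.test φ) ψ) ∉ Γ
  | testR x φ ψ _ Δ => SeqElem.lab x (PDLFormula.box (PDLProgram.test φ) ψ) ∉ Δ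
  | starL x α φ Γ _ => SeqElem.lab x (PDLFormula.box (PDLProgram.star α) φ) ∉ Γ
  | starR x α φ _ Δ => SeqElem.lab x (PDLFormula.box (PDLProgram.star α) φ) ∉ Δ
  | _ => True

/-- `B` (in the antecedent of the `i`-th premise) is an immediate ancestor of `A`
(in the antecedent of the conclusion). -/
def antAncestor : RuleApp → ℕ → SeqElem → SeqElem → Prop
  | ax _, _, _, _ => False
  | botL _, _, _, _ => False
  | wl _ Γ _, i, A, B => i = 0 ∧ A ∈ Γ ∧ B = A
  | wr _ Γ _, i, A, B => i = 0 ∧ A ∈ Γ ∧ B = A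
  | andL x φ ψ Γ _, i, A, B => i = 0 ∧
      ((A ∈ Γ ∧ B = A) ∨
       (A = SeqElem.lab x (PDLFormula.and φ ψ) ∧ (B = SeqElem.lab x φ ∨ B = SeqElem.lab x ψ)))
  | andR _ _ _ Γ _, i, A, B => i < 2 ∧ A ∈ Γ ∧ B = A
  | orL x φ ψ Γ _, i, A, B => i < 2 ∧
      ((A ∈ Γ ∧ B = A) ∨
       (A = SeqElem.lab x (PDLFormula.or φ ψ) ∧ B = SeqElem.lab x (if i = 0 then φ else ψ)))
  | orR _ _ _ Γ _, i, A, B => i = 0 ∧ A ∈ Γ ∧ B = A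
  | impL x φ ψ Γ _, i, A, B =>
      (i = 0 ∧ A ∈ Γ ∧ B = A) ∨
      (i = 1 ∧ ((A ∈ Γ ∧ B = A) ∨
        (A = SeqElem.lab x (PDLFormula.imp φ ψ) ∧ B = SeqElem.lab x ψ)))
  | impR _ _ _ Γ _, i, A, B => i = 0 ∧ A ∈ Γ ∧ B = A
  | boxL x a y φ Γ _, i, A, B => i = 0 ∧
      ((A ∈ Γ ∧ B = A) ∨
       (A = SeqElem.lab x (PDLFormula.box (PDLProgram.atom a) φ) ∧ B = SeqElem.lab y φ))
  | boxR _ _ _ _ Γ _, i, A, B => i = 0 ∧ A ∈ Γ ∧ B = A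
  | compL x α β φ Γ _, i, A, B => i = 0 ∧
      ((A ∈ Γ ∧ B = A) ∨
       (A = SeqElem.lab x (PDLFormula.box (PDLProgram.comp α β) φ) ∧
        B = SeqElem.lab x (PDLFormula.box α (PDLFormula.box β φ))))
  | compR _ _ _ _ Γ _, i, A, B => i = 0 ∧ A ∈ Γ ∧ B = A
  | choiceL x α β φ Γ _, i, A, B => i = 0 ∧
      ((A ∈ Γ ∧ B = A) ∨
       (A = SeqElem.lab x (PDLFormula.box (PDLProgram.choice α β) φ) ∧
        (B = SeqElem.lab x (PDLFormula.box α φ) ∨ B = SeqElem.lab x (PDLFormula.box β φ))))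
  | choiceR _ _ _ _ Γ _, i, A, B => i < 2 ∧ A ∈ Γ ∧ B = A
  | testL x φ ψ Γ _, i, A, B =>
      (i = 0 ∧ A ∈ Γ ∧ B = A) ∨
      (i = 1 ∧ ((A ∈ Γ ∧ B = A) ∨
        (A = SeqElem.lab x (PDLFormula.box (PDLProgram.test φ) ψ) ∧ B = SeqElem.lab x ψ)))
  | testR _ _ _ Γ _, i, A, B => i = 0 ∧ A ∈ Γ ∧ B = A
  | starL x α φ Γ _, i, A, B => i = 0 ∧
      ((A ∈ Γ ∧ B = A) ∨
       (A = SeqElem.lab x (PDLFormula.box (PDLProgram.star α) φ) ∧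
        (B = SeqElem.lab x φ ∨
         B = SeqElem.lab x (PDLFormula.box α (PDLFormula.box (PDLProgram.star α) φ)))))
  | starR _ _ _ Γ _, i, A, B => i < 2 ∧ A ∈ Γ ∧ B = A
  | subst x y Γ _, i, A, B => i = 0 ∧ B ∈ Γ ∧ A = B.subst x y
  | cut _ Γ _ Γ₂ _, i, A, B =>
      (i = 0 ∧ A ∈ Γ ∧ B = A) ∨ (i = 1 ∧ A ∈ Γ₂ ∧ B = A)

/-- `B` (in the consequent of the `i`-th premise) is an immediate ancestor of `A`
(in the consequent of the conclusion). -/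
def sucAncestor : RuleApp → ℕ → SeqElem → SeqElem → Prop
  | ax _, _, _, _ => False
  | botL _, _, _, _ => False
  | wl _ _ Δ, i, A, B => i = 0 ∧ A ∈ Δ ∧ B = A
  | wr _ _ Δ, i, A, B => i = 0 ∧ A ∈ Δ ∧ B = A
  | andL _ _ _ _ Δ, i, A, B => i = 0 ∧ A ∈ Δ ∧ B = A
  | andR x φ ψ _ Δ, i, A, B => i < 2 ∧
      ((A ∈ Δ ∧ B = A) ∨
       (A = SeqElem.lab x (PDLFormula.and φ ψ) ∧ B = SeqElem.lab x (if i = 0 then φ else ψ)))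
  | orL _ _ _ _ Δ, i, A, B => i < 2 ∧ A ∈ Δ ∧ B = A
  | orR x φ ψ _ Δ, i, A, B => i = 0 ∧
      ((A ∈ Δ ∧ B = A) ∨
       (A = SeqElem.lab x (PDLFormula.or φ ψ) ∧ (B = SeqElem.lab x φ ∨ B = SeqElem.lab x ψ)))
  | impL _ _ _ _ Δ, i, A, B => i < 2 ∧ A ∈ Δ ∧ B = A
  | impR x φ ψ _ Δ, i, A, B => i = 0 ∧
      ((A ∈ Δ ∧ B = A) ∨ (A = SeqElem.lab x (PDLFormula.imp φ ψ) ∧ B = SeqElem.lab x ψ))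
  | boxL _ _ _ _ _ Δ, i, A, B => i = 0 ∧ A ∈ Δ ∧ B = A
  | boxR x a y φ _ Δ, i, A, B => i = 0 ∧
      ((A ∈ Δ ∧ B = A) ∨
       (A = SeqElem.lab x (PDLFormula.box (PDLProgram.atom a) φ) ∧ B = SeqElem.lab y φ))
  | compL _ _ _ _ _ Δ, i, A, B => i = 0 ∧ A ∈ Δ ∧ B = A
  | compR x α β φ _ Δ, i, A, B => i = 0 ∧
      ((A ∈ Δ ∧ B = A) ∨
       (A = SeqElem.lab x (PDLFormula.box (PDLProgram.comp α β) φ) ∧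
        B = SeqElem.lab x (PDLFormula.box α (PDLFormula.box β φ))))
  | choiceL _ _ _ _ _ Δ, i, A, B => i = 0 ∧ A ∈ Δ ∧ B = A
  | choiceR x α β φ _ Δ, i, A, B => i < 2 ∧
      ((A ∈ Δ ∧ B = A) ∨
       (A = SeqElem.lab x (PDLFormula.box (PDLProgram.choice α β) φ) ∧
        B = SeqElem.lab x (PDLFormula.box (if i = 0 then α else β) φ)))
  | testL _ _ _ _ Δ, i, A, B => i < 2 ∧ A ∈ Δ ∧ B = A
  | testR x φ ψ _ Δ, i, A, B => i = 0 ∧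
      ((A ∈ Δ ∧ B = A) ∨
       (A = SeqElem.lab x (PDLFormula.box (PDLProgram.test φ) ψ) ∧ B = SeqElem.lab x ψ))
  | starL _ _ _ _ Δ, i, A, B => i = 0 ∧ A ∈ Δ ∧ B = A
  | starR x α φ _ Δ, i, A, B => i < 2 ∧
      ((A ∈ Δ ∧ B = A) ∨
       (A = SeqElem.lab x (PDLFormula.box (PDLProgram.star α) φ) ∧
        B = SeqElem.lab x (if i = 0 then φ
              else PDLFormula.box α (PDLFormula.box (PDLProgram.star α) φ))))
  | subst x y _ Δ, i, A, B => i = 0 ∧ B ∈ Δ ∧ A = B.subst x y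
  | cut _ _ Δ _ Δ₂, i, A, B =>
      (i = 0 ∧ A ∈ Δ ∧ B = A) ∨ (i = 1 ∧ A ∈ Δ₂ ∧ B = A)

end RuleApp
/-! ### Derivations: possibly infinite trees of rule applications, with open leaves -/

/-- A node of a derivation: either a rule application, or an open leaf with its sequent. -/
abbrev DNode := Sum RuleApp Sequent

def DNode.concl : DNode → Sequent := Sum.elim RuleApp.conc id

/-- A (possibly infinite, possibly open) derivation, presented as an assignment of nodes to
the addresses (lists of child indices) of an infinitely-branching tree. -/
structure Deriv where
  node : List ℕ → Option DNode
  wf_rule : ∀ p r, node p = some (Sum.inl r) → r.wf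
  children : ∀ p r, node p = some (Sum.inl r) →
      ∀ i, (node (p ++ [i])).map DNode.concl = r.prems[i]?
  leaf_no_children : ∀ p S, node p = some (Sum.inr S) → ∀ i, node (p ++ [i]) = none
  tree_closed : ∀ p i, node p = none → node (p ++ [i]) = none

namespace Deriv

def ruleAt (D : Deriv) (p : List ℕ) : Option RuleApp :=
  match D.node p with
  | some (Sum.inl r) => some r
  | _ => none

def openAt (D : Deriv) (p : List ℕ) : Option Sequent :=
  match D.node p with
  | some (Sum.inr S) => some S
  | _ => none

def seqAt (D : Deriv) (p : List ℕ) : Option Sequent := (D.node p).map DNode.concl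

def Finite (D : Deriv) : Prop := { p | (D.node p).isSome }.Finite

def NoOpen (D : Deriv) : Prop := ∀ p S, D.node p ≠ some (Sum.inr S)

end Deriv

/-! ### Infinite paths, traces and the global trace condition -/

/-- The address of the `n`-th node on the infinite branch determined by the sequence `f` of
child indices. -/
def pathAddr (f : ℕ → ℕ) (n : ℕ) : List ℕ := (List.range n).map f

/-- `f` determines an infinite path in the derivation tree whose rules are given by `R`. -/
def IsInfPath (R : List ℕ → Option RuleApp) (f : ℕ → ℕ) : Prop :=
  ∀ n, (R (pathAddr f n)).isSome

/-- The infinite path determined by `f` is followed (from some point `N` on) by an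
infinitely progressing trace. -/
def FollowedByProgTrace (R : List ℕ → Option RuleApp) (f : ℕ → ℕ) : Prop :=
  ∃ (N : ℕ) (g : ℕ → TraceValue),
    (∀ k, ∃ r, R (pathAddr f (N + k)) = some r ∧
        RuleApp.tracePair r (f (N + k)) (g k) (g (k + 1))) ∧
    (∀ m, ∃ k, m ≤ k ∧ ∃ r, R (pathAddr f (N + k)) = some r ∧
        RuleApp.progressing r (f (N + k)) (g k) (g (k + 1)))

/-- The global trace condition. -/
def GTC (R : List ℕ → Option RuleApp) : Prop :=
  ∀ f, IsInfPath R f → FollowedByProgTrace R f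

/-- A `G3PDL∞` proof of `S`: a pre-proof (derivation without open leaves) whose root sequent is
`S` and which satisfies the global trace condition. -/
def Deriv.IsProofOf (D : Deriv) (S : Sequent) : Prop :=
  D.seqAt [] = some S ∧ D.NoOpen ∧ GTC D.ruleAt

/-! ### Finite traces along finite paths in a derivation -/

/-- `tr` is a trace covering the path from the node at address `base` to the node at address
`base ++ tail`. -/
def CoversFrom (D : Deriv) (base tail : List ℕ) (tr : List TraceValue) : Prop :=
  tr.length = tail.length + 1 ∧
  ∀ i r j τ τ', D.ruleAt (base ++ tail.take i) = some r → tail[i]? = some j →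
    tr[i]? = some τ → tr[i + 1]? = some τ' → RuleApp.tracePair r j τ τ'

/-- The trace `tr` covering the path from `base` along `tail` progresses at position `i`. -/
def ProgAtFrom (D : Deriv) (base tail : List ℕ) (tr : List TraceValue) (i : ℕ) : Prop :=
  ∃ r j τ τ', D.ruleAt (base ++ tail.take i) = some r ∧ tail[i]? = some j ∧
    tr[i]? = some τ ∧ tr[i + 1]? = some τ' ∧ RuleApp.progressing r j τ τ'

/-! ### Cyclic derivations and their unfoldings -/

/-- Dereference an address: at an ordinary node stay put, at a bud jump to its companion. -/
def Deriv.deref (D : Deriv) (c : List ℕ → Option (List ℕ)) (p : List ℕ) : Option (List ℕ) :=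
  match D.node p with
  | some (Sum.inl _) => some p
  | some (Sum.inr _) => c p
  | none => none

/-- The address (in the finite tree) of the node corresponding to the address `p` of the
infinite unfolding. -/
def Deriv.unfoldAddr (D : Deriv) (c : List ℕ → Option (List ℕ)) (p : List ℕ) :
    Option (List ℕ) :=
  p.foldl (fun q i => q.bind fun q' => D.deref c (q' ++ [i])) (D.deref c [])

/-- The rule applied at address `p` of the infinite unfolding of the cyclic derivation. -/
def Deriv.unfoldRule (D : Deriv) (c : List ℕ → Option (List ℕ)) (p : List ℕ) :
    Option RuleApp :=
  (D.unfoldAddr c p).bind fun q => D.ruleAt q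

/-- Each bud assigned a companion must be assigned an internal node carrying a syntactically
identical sequent. -/
def CompanionCond (D : Deriv) (c : List ℕ → Option (List ℕ)) : Prop :=
  ∀ p S, D.node p = some (Sum.inr S) →
    ∀ q, c p = some q → ∃ r, D.node q = some (Sum.inl r) ∧ RuleApp.conc r = S

/-- Every bud is assigned a companion. -/
def FullCompanion (D : Deriv) (c : List ℕ → Option (List ℕ)) : Prop :=
  ∀ p S, D.node p = some (Sum.inr S) → ∃ q, c p = some q

/-- `S` is derivable in the cyclic system `G3PDLω`: there is a finite derivation tree, with each
bud assigned a companion, whose infinite unfolding satisfies the global trace condition. -/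
def CyclicDerivable (S : Sequent) : Prop :=
  ∃ (D : Deriv) (c : List ℕ → Option (List ℕ)),
    D.seqAt [] = some S ∧ D.Finite ∧ CompanionCond D c ∧ FullCompanion D c ∧
    GTC (D.unfoldRule c)

/-! ### Search trees -/

/-- A sequent that can be closed by weakenings leading to (⊥) or an axiom. -/
def closable (S : Sequent) : Prop :=
  (∃ x, SeqElem.lab x PDLFormula.bot ∈ S.ant) ∨ ∃ A, A ∈ S.ant ∧ A ∈ S.suc

/-- The subtree rooted at `p` is a finite closed derivation using only weakening rules,
(Ax) and (⊥). -/
def ClosingSubtreeAt (D : Deriv) (p : List ℕ) : Prop :=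
  (∀ q r, D.ruleAt (p ++ q) = some r → RuleApp.isClosing r) ∧
  (∀ q, D.openAt (p ++ q) = none) ∧
  { q | (D.node (p ++ q)).isSome }.Finite

def PDLFormula.isNonAtomic (φ : PDLFormula) : Prop := ¬ φ.isAtomic

/-- A schedule: an enumeration of labelled non-atomic formulas in which each labelled
non-atomic formula occurs infinitely often. -/
def IsSchedule (σ : ℕ → Label × PDLFormula) : Prop :=
  (∀ n, (σ n).2.isNonAtomic) ∧
  ∀ (x : Label) (φ : PDLFormula), φ.isNonAtomic → ∀ n, ∃ m, n ≤ m ∧ σ m = (x, φ)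

/-- The schedule element `(x, φ)` triggers a rule application at the sequent `S`. -/
def SchedApplies (x : Label) (φ : PDLFormula) (S : Sequent) : Prop :=
  SeqElem.lab x φ ∈ S.suc ∨
  (SeqElem.lab x φ ∈ S.ant ∧
    match φ with
    | PDLFormula.box (PDLProgram.atom a) _ => ∃ y, SeqElem.rel x a y ∈ S.ant
    | _ => True)

/-- The rule applied by the search tree when `x : φ` is scheduled and occurs in the
consequent of `S`. -/
def schedRuleSuc (x : Label) (φ : PDLFormula) (S : Sequent) (r : RuleApp) : Prop :=
  match φ with
  | PDLFormula.and φ₁ φ₂ => r = RuleApp.andR x φ₁ φ₂ S.ant S.suc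
  | PDLFormula.or φ₁ φ₂ => r = RuleApp.orR x φ₁ φ₂ S.ant S.suc
  | PDLFormula.imp φ₁ φ₂ => r = RuleApp.impR x φ₁ φ₂ S.ant S.suc
  | PDLFormula.box (PDLProgram.atom a) ψ => ∃ y, r = RuleApp.boxR x a y ψ S.ant S.suc
  | PDLFormula.box (PDLProgram.comp α β) ψ => r = RuleApp.compR x α β ψ S.ant S.suc
  | PDLFormula.box (PDLProgram.choice α β) ψ => r = RuleApp.choiceR x α β ψ S.ant S.suc
  | PDLFormula.box (PDLProgram.test χ) ψ => r = RuleApp.testR x χ ψ S.ant S.suc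
  | PDLFormula.box (PDLProgram.star α) ψ => r = RuleApp.starR x α ψ S.ant S.suc
  | _ => False

/-- The rule applied by the search tree when `x : φ` is scheduled and occurs in the
antecedent of `S` (the case of a basic modality `[a]ψ` is handled by a chain of (□L)
applications instead). -/
def schedRuleAnt (x : Label) (φ : PDLFormula) (S : Sequent) (r : RuleApp) : Prop :=
  match φ with
  | PDLFormula.and φ₁ φ₂ => r = RuleApp.andL x φ₁ φ₂ S.ant S.suc
  | PDLFormula.or φ₁ φ₂ => r = RuleApp.orL x φ₁ φ₂ S.ant S.suc
  | PDLFormula.imp φ₁ φ₂ => r = RuleApp.impL x φ₁ φ₂ S.ant S.suc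
  | PDLFormula.box (PDLProgram.comp α β) ψ => r = RuleApp.compL x α β ψ S.ant S.suc
  | PDLFormula.box (PDLProgram.choice α β) ψ => r = RuleApp.choiceL x α β ψ S.ant S.suc
  | PDLFormula.box (PDLProgram.test χ) ψ => r = RuleApp.testL x χ ψ S.ant S.suc
  | PDLFormula.box (PDLProgram.star α) ψ => r = RuleApp.starL x α ψ S.ant S.suc
  | _ => False

/-- The search-tree step performed at a non-closable node `p` carrying the sequent `S`:
either we are in the middle of a (□L)-chain (recorded by `pend`), or the next applicable
schedule entry `j ≥ st p` is applied (advancing the stage to `j + 1`), or no schedule entry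
ever applies again and the node is an open leaf. -/
def SearchStepAt (σ : ℕ → Label × PDLFormula) (D : Deriv)
    (st : List ℕ → ℕ) (pend : List ℕ → List Label) (p : List ℕ) (S : Sequent) : Prop :=
  (∃ x a ψ y rest, pend p = y :: rest ∧
     σ (st p) = (x, PDLFormula.box (PDLProgram.atom a) ψ) ∧
     SeqElem.lab x (PDLFormula.box (PDLProgram.atom a) ψ) ∈ S.ant ∧
     SeqElem.rel x a y ∈ S.ant ∧
     D.node p = some (Sum.inl (RuleApp.boxL x a y ψ S.ant S.suc)) ∧
     pend (p ++ [0]) = rest ∧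
     st (p ++ [0]) = (if rest = [] then st p + 1 else st p)) ∨
  (pend p = [] ∧
    ((∃ j, st p ≤ j ∧ SchedApplies (σ j).1 (σ j).2 S ∧
        (∀ j', st p ≤ j' → j' < j → ¬ SchedApplies (σ j').1 (σ j').2 S) ∧
        ((SeqElem.lab (σ j).1 (σ j).2 ∈ S.suc ∧
           ∃ r, D.node p = some (Sum.inl r) ∧ schedRuleSuc (σ j).1 (σ j).2 S r ∧
             (∀ i, st (p ++ [i]) = j + 1 ∧ pend (p ++ [i]) = [])) ∨
         (SeqElem.lab (σ j).1 (σ j).2 ∉ S.suc ∧ SeqElem.lab (σ j).1 (σ j).2 ∈ S.ant ∧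
           ((∃ a ψ, (σ j).2 = PDLFormula.box (PDLProgram.atom a) ψ ∧
              ∃ (y : Label) (rest : List Label), (y :: rest).Nodup ∧
                (∀ z, z ∈ y :: rest ↔ SeqElem.rel (σ j).1 a z ∈ S.ant) ∧
                D.node p = some (Sum.inl (RuleApp.boxL (σ j).1 a y ψ S.ant S.suc)) ∧
                pend (p ++ [0]) = rest ∧
                st (p ++ [0]) = (if rest = [] then j + 1 else j)) ∨
            ((∀ a ψ, (σ j).2 ≠ PDLFormula.box (PDLProgram.atom a) ψ) ∧
              ∃ r, D.node p = some (Sum.inl r) ∧ schedRuleAnt (σ j).1 (σ j).2 S r ∧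
                (∀ i, st (p ++ [i]) = j + 1 ∧ pend (p ++ [i]) = [])))))) ∨
     ((∀ j, st p ≤ j → ¬ SchedApplies (σ j).1 (σ j).2 S) ∧
        D.node p = some (Sum.inr S))))

/-- `D` is a search tree for the sequent `S₀` with respect to the schedule `σ`: the limit of
the exhaustive proof-search construction in which, at each stage, closable open leaves are
closed by weakenings leading to (⊥) or an axiom, and the scheduled rule is applied at every
remaining open leaf in which the scheduled formula occurs. -/
def IsSearchTree (σ : ℕ → Label × PDLFormula) (S₀ : Sequent) (D : Deriv) : Prop :=
  D.seqAt [] = some S₀ ∧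
  ∃ (st : List ℕ → ℕ) (pend : List ℕ → List Label) (cl : List ℕ → Bool),
    st [] = 0 ∧ pend [] = [] ∧ cl [] = false ∧
    ∀ p S, D.seqAt p = some S → cl p = false →
      (closable S → ClosingSubtreeAt D p ∧ ∀ q, q ≠ ([] : List ℕ) → cl (p ++ q) = true) ∧
      (¬ closable S →
        (∀ i, cl (p ++ [i]) = false) ∧ SearchStepAt σ D st pend p S)

/-! ### Templates and the determined countermodel -/

/-- A template induced by a search tree `D`: the (possibly infinite) pair of sets of
antecedent/consequent elements of either an open node of `D`, or an untraceable branch of `D`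
(an infinite branch not followed by any infinitely progressing trace). -/
def Template (D : Deriv) (Γs Δs : Set SeqElem) : Prop :=
  (∃ p S, D.node p = some (Sum.inr S) ∧ Γs = ↑S.ant ∧ Δs = ↑S.suc) ∨
  (∃ f : ℕ → ℕ, IsInfPath D.ruleAt f ∧ ¬ FollowedByProgTrace D.ruleAt f ∧
     Γs = { A | ∃ n S, D.seqAt (pathAddr f n) = some S ∧ A ∈ S.ant } ∧
     Δs = { A | ∃ n S, D.seqAt (pathAddr f n) = some S ∧ A ∈ S.suc })

/-- The PDL model determined by a template: its states are the labels, an atomic proposition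
holds at `x` iff `x : p` is in the antecedent part, and `(x, y)` is an `a`-transition iff
`x →a y` is in the antecedent part. -/
def templateModel (Γs : Set SeqElem) : PDLModel where
  State := Label
  propI := fun q => { x | SeqElem.lab x (PDLFormula.atom q) ∈ Γs }
  progI := fun a => { w | SeqElem.rel w.1 a w.2 ∈ Γs }


set_option maxHeartbeats 1000000

open Classical

mutual
def sizeF : PDLFormula → ℕ
  | .bot => 1
  | .atom _ => 1
  | .and φ ψ => sizeF φ + sizeF ψ + 1
  | .or φ ψ => sizeF φ + sizeF ψ + 1
  | .imp φ ψ => sizeF φ + sizeF ψ + 1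
  | .box α φ => sizeP α + sizeF φ + 1

def sizeP : PDLProgram → ℕ
  | .atom _ => 1
  | .comp α β => sizeP α + sizeP β + 1
  | .choice α β => sizeP α + sizeP β + 1
  | .test φ => sizeF φ + 1
  | .star α => sizeP α + 1
end

/-- One step of the search construction, along the branch. -/
def BStep (σ : ℕ → Label × PDLFormula) (S : ℕ → Sequent) (r : ℕ → RuleApp)
    (st : ℕ → ℕ) (pend : ℕ → List Label) (n : ℕ) : Prop :=
  (∃ x a ψ y rest, pend n = y :: rest ∧ σ (st n) = (x, PDLFormula.box (PDLProgram.atom a) ψ) ∧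
     SeqElem.lab x (PDLFormula.box (PDLProgram.atom a) ψ) ∈ (S n).ant ∧
     SeqElem.rel x a y ∈ (S n).ant ∧
     r n = RuleApp.boxL x a y ψ (S n).ant (S n).suc ∧
     pend (n+1) = rest ∧ st (n+1) = (if rest = [] then st n + 1 else st n)) ∨
  (pend n = [] ∧ ∃ j, st n ≤ j ∧ SchedApplies (σ j).1 (σ j).2 (S n) ∧
     (∀ j', st n ≤ j' → j' < j → ¬ SchedApplies (σ j').1 (σ j').2 (S n)) ∧
     ((SeqElem.lab (σ j).1 (σ j).2 ∈ (S n).suc ∧ schedRuleSuc (σ j).1 (σ j).2 (S n) (r n) ∧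
        st (n+1) = j + 1 ∧ pend (n+1) = []) ∨
      (SeqElem.lab (σ j).1 (σ j).2 ∉ (S n).suc ∧ SeqElem.lab (σ j).1 (σ j).2 ∈ (S n).ant ∧
        ((∃ a ψ, (σ j).2 = PDLFormula.box (PDLProgram.atom a) ψ ∧ ∃ y rest, (y::rest).Nodup ∧
           (∀ z, z ∈ y::rest ↔ SeqElem.rel (σ j).1 a z ∈ (S n).ant) ∧
           r n = RuleApp.boxL (σ j).1 a y ψ (S n).ant (S n).suc ∧
           pend (n+1) = rest ∧ st (n+1) = (if rest = [] then j+1 else j)) ∨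
         ((∀ a ψ, (σ j).2 ≠ PDLFormula.box (PDLProgram.atom a) ψ) ∧
           schedRuleAnt (σ j).1 (σ j).2 (S n) (r n) ∧
           st (n+1) = j + 1 ∧ pend (n+1) = [])))))

structure Branch where
  σ : ℕ → Label × PDLFormula
  D : Deriv
  f : ℕ → ℕ
  S : ℕ → Sequent
  r : ℕ → RuleApp
  st : ℕ → ℕ
  pend : ℕ → List Label
  hσ : IsSchedule σ
  hrule : ∀ n, D.ruleAt (pathAddr f n) = some (r n)
  hprem : ∀ n, (r n).prems[f n]? = some (S (n+1))
  hnc : ∀ n, ¬ closable (S n)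
  hstep : ∀ n, BStep σ S r st pend n
  huntrace : ¬ FollowedByProgTrace D.ruleAt f

lemma getElem?_lt {α : Type*} {l : List α} {i : ℕ} {a : α} (h : l[i]? = some a) :
    i < l.length := by
  by_contra hc
  rw [List.getElem?_eq_none (by omega)] at h
  simp at h

lemma pathAddr_succ (f : ℕ → ℕ) (n : ℕ) :
    pathAddr f (n+1) = pathAddr f n ++ [f n] := by
  simp [pathAddr, List.range_succ]

lemma pathAddr_add (f : ℕ → ℕ) (n k : ℕ) :
    pathAddr f (n+k) = pathAddr f n ++ (List.range k).map (fun i => f (n+i)) := by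
  induction k with
  | zero => simp [pathAddr]
  | succ k ih =>
      rw [← Nat.add_assoc, pathAddr_succ, ih, List.range_succ]
      simp

lemma exists_branch (σ : ℕ → Label × PDLFormula) (hσ : IsSchedule σ)
    (S₀ : Sequent) (D : Deriv) (hD : IsSearchTree σ S₀ D)
    (f : ℕ → ℕ) (hf : IsInfPath D.ruleAt f) (hnt : ¬ FollowedByProgTrace D.ruleAt f) :
    ∃ B : Branch, B.σ = σ ∧ B.D = D ∧ B.f = f ∧
      ∀ n, D.seqAt (pathAddr f n) = some (B.S n) := by
  obtain ⟨hroot, st, pend, cl, hst0, hp0, hcl0, hmain⟩ := hD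
  have hnode : ∀ n, ∃ r : RuleApp, D.node (pathAddr f n) = some (Sum.inl r) := by
    intro n
    have := hf n
    unfold Deriv.ruleAt at this
    rcases h : D.node (pathAddr f n) with _ | (r | s) <;> rw [h] at this <;> simp at this
    exact ⟨r, rfl⟩
  choose r hr using hnode
  set S : ℕ → Sequent := fun n => (r n).conc with hS
  have hseq : ∀ n, D.seqAt (pathAddr f n) = some (S n) := by
    intro n; unfold Deriv.seqAt; rw [hr n]; rfl
  have hprem : ∀ n, (r n).prems[f n]? = some (S (n+1)) := by
    intro n
    have := D.children (pathAddr f n) (r n) (hr n) (f n)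
    rw [← pathAddr_succ] at this
    rw [← this, hr (n+1)]; rfl
  -- cl is false all along the branch, sequents not closable, search steps hold
  have key : ∀ n, cl (pathAddr f n) = false →
      ¬ closable (S n) ∧ cl (pathAddr f (n+1)) = false ∧
      SearchStepAt σ D st pend (pathAddr f n) (S n) := by
    intro n hcl
    have h := hmain (pathAddr f n) (S n) (hseq n) hcl
    have hncl : ¬ closable (S n) := by
      intro hc
      obtain ⟨⟨_, _, hfin⟩, _⟩ := h.1 hc
      -- infinitely many nodes below pathAddr f n
      have hinj : Function.Injective
          (fun k => (List.range k).map (fun i => f (n+i))) := by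
        intro a b hab
        have : a = b := by
          have := congrArg List.length hab
          simpa using this
        exact this
      have hmem : ∀ k, ((List.range k).map (fun i => f (n+i))) ∈
          { q | (D.node (pathAddr f n ++ q)).isSome } := by
        intro k
        have := hr (n + k)
        rw [pathAddr_add] at this
        simp [this]
      exact Set.infinite_of_injective_forall_mem hinj hmem hfin
    have h2 := h.2 hncl
    refine ⟨hncl, ?_, h2.2⟩
    rw [pathAddr_succ]; exact h2.1 (f n)
  have hclb : ∀ n, cl (pathAddr f n) = false := by
    intro n
    induction n with
    | zero => simpa [pathAddr] using hcl0
    | succ n ih => exact (key n ih).2.1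
  have hncl : ∀ n, ¬ closable (S n) := fun n => (key n (hclb n)).1
  have hsearch : ∀ n, SearchStepAt σ D st pend (pathAddr f n) (S n) :=
    fun n => (key n (hclb n)).2.2
  -- convert
  have hbstep : ∀ n, BStep σ S r (fun n => st (pathAddr f n)) (fun n => pend (pathAddr f n)) n := by
    intro n
    rcases hsearch n with ⟨x, a, ψ, y, rest, h1, h2, h3, h4, h5, h6, h7⟩ | ⟨hpe, hrest⟩
    · left
      have hrn : r n = RuleApp.boxL x a y ψ (S n).ant (S n).suc :=
        Sum.inl.inj (Option.some.inj ((hr n).symm.trans h5))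
      have hf0 : f n = 0 := by
        have h := getElem?_lt (hprem n)
        rw [hrn] at h
        simp [RuleApp.prems] at h
        omega
      have hch : pathAddr f n ++ [0] = pathAddr f (n+1) := by
        rw [pathAddr_succ, hf0]
      refine ⟨x, a, ψ, y, rest, h1, h2, h3, h4, hrn, ?_, ?_⟩
      · show pend (pathAddr f (n+1)) = rest
        rw [← hch]; exact h6
      · show st (pathAddr f (n+1)) = _
        rw [← hch]; exact h7
    · rcases hrest with ⟨j, hj1, hj2, hj3, hbr⟩ | ⟨hno, hleaf⟩
      · right
        refine ⟨hpe, j, hj1, hj2, hj3, ?_⟩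
        rcases hbr with ⟨hin, r', hr', hsr, hst'⟩ | ⟨hnin, hin, hbx⟩
        · left
          have hrn : r n = r' := Sum.inl.inj (Option.some.inj ((hr n).symm.trans hr'))
          refine ⟨hin, hrn ▸ hsr, ?_, ?_⟩
          · show st (pathAddr f (n+1)) = j + 1
            have := (hst' (f n)).1; rwa [← pathAddr_succ] at this
          · show pend (pathAddr f (n+1)) = []
            have := (hst' (f n)).2; rwa [← pathAddr_succ] at this
        · right
          refine ⟨hnin, hin, ?_⟩
          rcases hbx with ⟨a, ψ, hform, y, rest, hnd, hiff, hr', hpd, hst'⟩ | ⟨hnb, r', hr', hsr, hst'⟩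
          · left
            have hrn : r n = RuleApp.boxL (σ j).1 a y ψ (S n).ant (S n).suc :=
              Sum.inl.inj (Option.some.inj ((hr n).symm.trans hr'))
            have hf0 : f n = 0 := by
              have h := getElem?_lt (hprem n)
              rw [hrn] at h
              simp [RuleApp.prems] at h
              omega
            have hch : pathAddr f n ++ [0] = pathAddr f (n+1) := by
              rw [pathAddr_succ, hf0]
            refine ⟨a, ψ, hform, y, rest, hnd, hiff, hrn, ?_, ?_⟩
            · show pend (pathAddr f (n+1)) = rest
              rw [← hch]; exact hpd
            · show st (pathAddr f (n+1)) = _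
              rw [← hch]; exact hst'
          · right
            have hrn : r n = r' := Sum.inl.inj (Option.some.inj ((hr n).symm.trans hr'))
            refine ⟨hnb, hrn ▸ hsr, ?_, ?_⟩
            · show st (pathAddr f (n+1)) = j + 1
              have := (hst' (f n)).1; rwa [← pathAddr_succ] at this
            · show pend (pathAddr f (n+1)) = []
              have := (hst' (f n)).2; rwa [← pathAddr_succ] at this
      · exfalso
        have := (hr n).symm.trans hleaf
        simp at this
  exact ⟨⟨σ, D, f, S, r, fun n => st (pathAddr f n), fun n => pend (pathAddr f n),
    hσ, fun n => by unfold Deriv.ruleAt; rw [hr n], hprem, hncl, hbstep, hnt⟩,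
    rfl, rfl, rfl, hseq⟩

lemma singleton_prem {P Q : Sequent} {i : ℕ} (h : [P][i]? = some Q) : Q = P := by
  have := getElem?_lt h
  simp at this
  subst this
  simpa using h.symm

lemma pair_prem {P₁ P₂ Q : Sequent} {i : ℕ} (h : [P₁, P₂][i]? = some Q) :
    (i = 0 ∧ Q = P₁) ∨ (i = 1 ∧ Q = P₂) := by
  have := getElem?_lt h
  simp at this
  interval_cases i
  · left; simpa using h.symm
  · right; simpa using h.symm

lemma prem_mono_of_suc {x : Label} {φ : PDLFormula} {S : Sequent} {r : RuleApp}
    (h : schedRuleSuc x φ S r) {i : ℕ} {P : Sequent} (hp : r.prems[i]? = some P) :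
    S.ant ⊆ P.ant ∧ S.suc ⊆ P.suc := by
  cases φ with
  | bot => simp [schedRuleSuc] at h
  | atom p => simp [schedRuleSuc] at h
  | and φ ψ =>
      simp only [schedRuleSuc] at h; subst h
      rcases pair_prem hp with ⟨_, rfl⟩ | ⟨_, rfl⟩ <;>
        exact ⟨fun e he => he, fun e he => by simp [Finset.mem_insert, he]⟩
  | or φ ψ =>
      simp only [schedRuleSuc] at h; subst h
      rw [singleton_prem hp]
      exact ⟨fun e he => he, fun e he => by simp [Finset.mem_insert, he]⟩
  | imp φ ψ =>
      simp only [schedRuleSuc] at h; subst h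
      rw [singleton_prem hp]
      exact ⟨fun e he => by simp [Finset.mem_insert, he],
        fun e he => by simp [Finset.mem_insert, he]⟩
  | box α ψ =>
      cases α with
      | atom a =>
          simp only [schedRuleSuc] at h
          obtain ⟨y, rfl⟩ := h
          rw [singleton_prem hp]
          exact ⟨fun e he => by simp [Finset.mem_insert, he],
            fun e he => by simp [Finset.mem_insert, he]⟩
      | comp α β =>
          simp only [schedRuleSuc] at h; subst h
          rw [singleton_prem hp]
          exact ⟨fun e he => he, fun e he => by simp [Finset.mem_insert, he]⟩
      | choice α β =>
          simp only [schedRuleSuc] at h; subst h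
          rcases pair_prem hp with ⟨_, rfl⟩ | ⟨_, rfl⟩ <;>
            exact ⟨fun e he => he, fun e he => by simp [Finset.mem_insert, he]⟩
      | test χ =>
          simp only [schedRuleSuc] at h; subst h
          rw [singleton_prem hp]
          exact ⟨fun e he => by simp [Finset.mem_insert, he],
            fun e he => by simp [Finset.mem_insert, he]⟩
      | star α =>
          simp only [schedRuleSuc] at h; subst h
          rcases pair_prem hp with ⟨_, rfl⟩ | ⟨_, rfl⟩ <;>
            exact ⟨fun e he => he, fun e he => by simp [Finset.mem_insert, he]⟩

lemma prem_mono_of_ant {x : Label} {φ : PDLFormula} {S : Sequent} {r : RuleApp}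
    (h : schedRuleAnt x φ S r) {i : ℕ} {P : Sequent} (hp : r.prems[i]? = some P) :
    S.ant ⊆ P.ant ∧ S.suc ⊆ P.suc := by
  cases φ with
  | bot => simp [schedRuleAnt] at h
  | atom p => simp [schedRuleAnt] at h
  | and φ ψ =>
      simp only [schedRuleAnt] at h; subst h
      rw [singleton_prem hp]
      exact ⟨fun e he => by simp [Finset.mem_insert, he], fun e he => he⟩
  | or φ ψ =>
      simp only [schedRuleAnt] at h; subst h
      rcases pair_prem hp with ⟨_, rfl⟩ | ⟨_, rfl⟩ <;>
        exact ⟨fun e he => by simp [Finset.mem_insert, he], fun e he => he⟩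
  | imp φ ψ =>
      simp only [schedRuleAnt] at h; subst h
      rcases pair_prem hp with ⟨_, rfl⟩ | ⟨_, rfl⟩
      · exact ⟨fun e he => he, fun e he => by simp [Finset.mem_insert, he]⟩
      · exact ⟨fun e he => by simp [Finset.mem_insert, he], fun e he => he⟩
  | box α ψ =>
      cases α with
      | atom a => simp [schedRuleAnt] at h
      | comp α β =>
          simp only [schedRuleAnt] at h; subst h
          rw [singleton_prem hp]
          exact ⟨fun e he => by simp [Finset.mem_insert, he], fun e he => he⟩
      | choice α β =>
          simp only [schedRuleAnt] at h; subst h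
          rw [singleton_prem hp]
          exact ⟨fun e he => by simp [Finset.mem_insert, he], fun e he => he⟩
      | test χ =>
          simp only [schedRuleAnt] at h; subst h
          rcases pair_prem hp with ⟨_, rfl⟩ | ⟨_, rfl⟩
          · exact ⟨fun e he => he, fun e he => by simp [Finset.mem_insert, he]⟩
          · exact ⟨fun e he => by simp [Finset.mem_insert, he], fun e he => he⟩
      | star α =>
          simp only [schedRuleAnt] at h; subst h
          rw [singleton_prem hp]
          exact ⟨fun e he => by simp [Finset.mem_insert, he], fun e he => he⟩

namespace Branch

lemma step_mono (B : Branch) (n : ℕ) :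
    (B.S n).ant ⊆ (B.S (n+1)).ant ∧ (B.S n).suc ⊆ (B.S (n+1)).suc := by
  have hp := B.hprem n
  rcases B.hstep n with ⟨x, a, ψ, y, rest, h1, h2, h3, h4, hrn, h6, h7⟩ |
    ⟨hpe, j, hj1, hj2, hj3, hbr⟩
  · rw [hrn] at hp
    rw [singleton_prem hp]
    exact ⟨fun e he => by simp [Finset.mem_insert, he], fun e he => he⟩
  · rcases hbr with ⟨hin, hsr, _, _⟩ |
      ⟨hnin, hin, ⟨a, ψ, hform, y, rest, hnd, hiff, hrn, _, _⟩ | ⟨hnb, hsr, _, _⟩⟩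
    · exact prem_mono_of_suc hsr hp
    · rw [hrn] at hp
      rw [singleton_prem hp]
      exact ⟨fun e he => by simp [Finset.mem_insert, he], fun e he => he⟩
    · exact prem_mono_of_ant hsr hp

lemma mono (B : Branch) {n m : ℕ} (h : n ≤ m) :
    (B.S n).ant ⊆ (B.S m).ant ∧ (B.S n).suc ⊆ (B.S m).suc := by
  induction m with
  | zero => simp_all
  | succ m ih =>
      rcases Nat.lt_or_ge n (m+1) with h' | h'
      · have := ih (by omega)
        exact ⟨this.1.trans (B.step_mono m).1, this.2.trans (B.step_mono m).2⟩
      · have : n = m + 1 := by omega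
        subst this
        exact ⟨fun _ h => h, fun _ h => h⟩

def Gb (B : Branch) : Set SeqElem := { A | ∃ n, A ∈ (B.S n).ant }
def Db (B : Branch) : Set SeqElem := { A | ∃ n, A ∈ (B.S n).suc }

lemma not_both (B : Branch) {A : SeqElem} (h1 : A ∈ B.Gb) (h2 : A ∈ B.Db) : False := by
  obtain ⟨n, hn⟩ := h1
  obtain ⟨m, hm⟩ := h2
  rcases Nat.le_total n m with h | h
  · exact B.hnc m (Or.inr ⟨A, (B.mono h).1 hn, hm⟩)
  · exact B.hnc n (Or.inr ⟨A, hn, (B.mono h).2 hm⟩)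

lemma no_bot (B : Branch) {x : Label} (h : SeqElem.lab x PDLFormula.bot ∈ B.Gb) : False := by
  obtain ⟨n, hn⟩ := h
  exact B.hnc n (Or.inl ⟨x, hn⟩)

lemma st_mono_step (B : Branch) (n : ℕ) : B.st n ≤ B.st (n+1) := by
  rcases B.hstep n with ⟨x, a, ψ, y, rest, h1, h2, h3, h4, hrn, h6, h7⟩ |
    ⟨hpe, j, hj1, hj2, hj3, hbr⟩
  · rw [h7]; split <;> omega
  · rcases hbr with ⟨_, _, h, _⟩ |
      ⟨_, _, ⟨a, ψ, _, y, rest, _, _, _, _, h⟩ | ⟨_, _, h, _⟩⟩ <;>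
      [skip; rw [h]; skip] <;> first | (rw [h]; omega) | (split <;> omega)

lemma st_mono (B : Branch) {n m : ℕ} (h : n ≤ m) : B.st n ≤ B.st m := by
  induction m with
  | zero => simp_all
  | succ m ih =>
      rcases Nat.lt_or_ge n (m+1) with h' | h'
      · exact (ih (by omega)).trans (B.st_mono_step m)
      · have : n = m + 1 := by omega
        subst this; exact le_refl _

lemma chain_end (B : Branch) :
    ∀ rest : List Label, ∀ n, B.pend n = rest → rest ≠ [] →
    ∃ m, n < m ∧ B.pend m = [] ∧ B.st m = B.st n + 1 := by
  intro rest
  induction rest with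
  | nil => intro n _ h; exact absurd rfl h
  | cons y rest ih =>
      intro n hp _
      rcases B.hstep n with ⟨x, a, ψ, y₁, rest₁, h1, h2, h3, h4, hrn, h6, h7⟩ |
        ⟨hpe, _⟩
      · rw [hp] at h1
        injection h1 with e1 e2
        subst e1
        subst e2
        by_cases hre : rest = []
        · subst hre
          exact ⟨n+1, by omega, h6, by rw [h7]; simp⟩
        · obtain ⟨m, hm1, hm2, hm3⟩ := ih (n+1) h6 hre
          refine ⟨m, by omega, hm2, ?_⟩
          rw [hm3, h7, if_neg hre]
      · rw [hp] at hpe; simp at hpe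

lemma st_bump (B : Branch) (n : ℕ) : ∃ m, n < m ∧ B.st n < B.st m := by
  rcases hpe : B.pend n with _ | ⟨y, rest⟩
  · rcases B.hstep n with ⟨x, a, ψ, y, rest, h1, _⟩ | ⟨_, j, hj1, _, _, hbr⟩
    · rw [hpe] at h1; simp at h1
    · rcases hbr with ⟨_, _, hst, _⟩ |
        ⟨_, _, ⟨a, ψ, _, y, rest, _, _, _, hpd, hst⟩ | ⟨_, _, hst, _⟩⟩
      · exact ⟨n+1, by omega, by omega⟩
      · by_cases hre : rest = []
        · subst hre; rw [if_pos rfl] at hst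
          exact ⟨n+1, by omega, by omega⟩
        · rw [if_neg hre] at hst
          obtain ⟨m, hm1, _, hm3⟩ := B.chain_end rest (n+1) hpd hre
          exact ⟨m, by omega, by omega⟩
      · exact ⟨n+1, by omega, by omega⟩
  · obtain ⟨m, hm1, _, hm3⟩ := B.chain_end (y :: rest) n hpe (by simp)
    exact ⟨m, hm1, by omega⟩

lemma st_unbounded (B : Branch) (n c : ℕ) : ∃ m, n ≤ m ∧ c < B.st m := by
  induction c with
  | zero =>
      obtain ⟨m, hm1, hm2⟩ := B.st_bump n
      exact ⟨m, by omega, by omega⟩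
  | succ c ih =>
      obtain ⟨m, hm1, hm2⟩ := ih
      obtain ⟨m', hm'1, hm'2⟩ := B.st_bump m
      exact ⟨m', by omega, by omega⟩

end Branch

namespace Branch

/-- At step `m`, the search procedure selects schedule entry `j` and applies the
corresponding rule. -/
def Chosen (B : Branch) (m j : ℕ) : Prop :=
  (SeqElem.lab (B.σ j).1 (B.σ j).2 ∈ (B.S m).suc ∧
     schedRuleSuc (B.σ j).1 (B.σ j).2 (B.S m) (B.r m)) ∨
  (SeqElem.lab (B.σ j).1 (B.σ j).2 ∉ (B.S m).suc ∧
   SeqElem.lab (B.σ j).1 (B.σ j).2 ∈ (B.S m).ant ∧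
     ((∃ a ψ, (B.σ j).2 = PDLFormula.box (PDLProgram.atom a) ψ ∧ ∃ y rest,
        (∀ z, z ∈ y :: rest ↔ SeqElem.rel (B.σ j).1 a z ∈ (B.S m).ant) ∧
        B.r m = RuleApp.boxL (B.σ j).1 a y ψ (B.S m).ant (B.S m).suc ∧
        B.pend (m+1) = rest ∧ B.st (m+1) = (if rest = [] then j+1 else j)) ∨
      ((∀ a ψ, (B.σ j).2 ≠ PDLFormula.box (PDLProgram.atom a) ψ) ∧
        schedRuleAnt (B.σ j).1 (B.σ j).2 (B.S m) (B.r m))))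

lemma select (B : Branch) {n j₀ : ℕ} (hj : B.st n < j₀)
    (happ : ∀ m, n ≤ m → SchedApplies (B.σ j₀).1 (B.σ j₀).2 (B.S m)) :
    ∃ m, n ≤ m ∧ B.Chosen m j₀ := by
  classical
  have hex : ∃ k, j₀ < B.st (n + k) := by
    obtain ⟨m, hm1, hm2⟩ := B.st_unbounded n j₀
    exact ⟨m - n, by rwa [Nat.add_sub_cancel' hm1]⟩
  set K := Nat.find hex with hK
  have hKspec : j₀ < B.st (n + K) := Nat.find_spec hex
  have hK1 : 1 ≤ K := by
    rcases Nat.eq_zero_or_pos K with h | h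
    · exfalso; rw [h] at hKspec; simp at hKspec; omega
    · exact h
  set m := n + K - 1 with hm
  have hmn : n ≤ m := by omega
  have hstm : B.st m ≤ j₀ := by
    have := Nat.find_min hex (m := K - 1) (by omega)
    have he : n + (K - 1) = m := by omega
    rw [he] at this
    omega
  have hstm1 : j₀ < B.st (m + 1) := by
    have he : m + 1 = n + K := by omega
    rw [he]; exact hKspec
  -- at every position in [n, m] with pend = [], a schedule entry is chosen
  rcases hpm : B.pend m with _ | ⟨yy, rr⟩
  · -- scheduled step at m
    rcases B.hstep m with ⟨x, a, ψ, y, rest, h1, _⟩ | ⟨hpe, j, hj1, hj2, hj3, hbr⟩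
    · rw [hpm] at h1; simp at h1
    · have hjle : j ≤ j₀ := by
        by_contra hgt
        exact hj3 j₀ hstm (by omega) (happ m hmn)
      rcases hbr with ⟨hin, hsr, hst, _⟩ |
        ⟨hnin, hin, ⟨a, ψ, hform, y, rest, hnd, hiff, hrn, hpd, hst⟩ | ⟨hnb, hsr, hst, _⟩⟩
      · have : j = j₀ := by omega
        subst this
        exact ⟨m, hmn, Or.inl ⟨hin, hsr⟩⟩
      · by_cases hre : rest = []
        · rw [if_pos hre] at hst
          have : j = j₀ := by omega
          subst this
          exact ⟨m, hmn, Or.inr ⟨hnin, hin,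
            Or.inl ⟨a, ψ, hform, y, rest, fun z => hiff z, hrn, hpd, by rw [hst, if_pos hre]⟩⟩⟩
        · rw [if_neg hre] at hst
          omega
      · have : j = j₀ := by omega
        subst this
        exact ⟨m, hmn, Or.inr ⟨hnin, hin, Or.inr ⟨hnb, hsr⟩⟩⟩
  · -- mid-chain at m: find the start of the chain
    -- st m = j₀ and the step is a chain step
    have hchain : B.st (m+1) ≤ B.st m + 1 := by
      rcases B.hstep m with ⟨x, a, ψ, y, rest, h1, _, _, _, _, _, h7⟩ | ⟨hpe, _⟩
      · rw [h7]; split <;> omega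
      · rw [hpm] at hpe; simp at hpe
    have hstmj : B.st m = j₀ := by omega
    -- there is a position in [n, m] with empty pend
    have hexists : ∃ k, n ≤ k ∧ k ≤ m ∧ B.pend k = [] := by
      by_contra hcon
      push_neg at hcon
      have hconst : ∀ d, n + d ≤ m → B.st (n + d) = B.st n ∧ B.pend (n + d) ≠ [] := by
        intro d
        induction d with
        | zero => intro _; exact ⟨rfl, hcon n le_rfl (by omega)⟩
        | succ d ih =>
            intro hd
            have ⟨ihst, ihpe⟩ := ih (by omega)
            have hne : B.pend (n + d + 1) ≠ [] := by
              have := hcon (n + d + 1) (by omega) (by omega)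
              rwa [Nat.add_assoc] at this ⊢
            rcases B.hstep (n + d) with ⟨x, a, ψ, y, rest, h1, _, _, _, _, h6, h7⟩ |
              ⟨hpe, _⟩
            · have hre : rest ≠ [] := by rw [← h6]; exact hne
              refine ⟨?_, by rw [show n + (d+1) = n + d + 1 by omega]; exact hne⟩
              rw [show n + (d+1) = n + d + 1 by omega, h7, if_neg hre]
              exact ihst
            · exact absurd hpe ihpe
      have hfinal := (hconst (m - n) (by omega)).1
      rw [Nat.add_sub_cancel' hmn] at hfinal
      omega
    obtain ⟨k₀, hk₀n, hk₀m, hk₀p⟩ := hexists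
    set P : ℕ → Prop := fun k => n ≤ k ∧ B.pend k = [] with hP
    set m₁ := Nat.findGreatest P m with hm₁
    have hPm₁ : P m₁ := Nat.findGreatest_spec (P := P) hk₀m ⟨hk₀n, hk₀p⟩
    have hm₁le : m₁ ≤ m := Nat.findGreatest_le m
    have hm₁lt : m₁ < m := by
      rcases Nat.lt_or_ge m₁ m with h | h
      · exact h
      · exfalso
        have : m₁ = m := by omega
        rw [this] at hPm₁
        rw [hPm₁.2] at hpm; simp at hpm
    have hnotP : ∀ k, m₁ < k → k ≤ m → B.pend k ≠ [] := by
      intro k h1 h2 hk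
      exact Nat.findGreatest_is_greatest h1 h2 ⟨by omega, hk⟩
    -- st is constant on [m₁ + 1, m]
    have hconst : ∀ d, m₁ + 1 + d ≤ m → B.st (m₁ + 1 + d) = B.st (m₁ + 1) := by
      intro d
      induction d with
      | zero => intro _; rfl
      | succ d ih =>
          intro hd
          have ihst := ih (by omega)
          rcases B.hstep (m₁ + 1 + d) with ⟨x, a, ψ, y, rest, h1, _, _, _, _, h6, h7⟩ |
            ⟨hpe, _⟩
          · have hre : rest ≠ [] := by
              rw [← h6]
              have := hnotP (m₁ + 1 + d + 1) (by omega) (by omega)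
              rwa [show m₁ + 1 + d + 1 = m₁ + 1 + (d+1) by omega]
            rw [show m₁ + 1 + (d+1) = m₁ + 1 + d + 1 by omega, h7, if_neg hre]
            exact ihst
          · exact absurd hpe (hnotP (m₁ + 1 + d) (by omega) (by omega))
    have hstm₁1 : B.st (m₁ + 1) = j₀ := by
      have := hconst (m - (m₁ + 1)) (by omega)
      rw [show m₁ + 1 + (m - (m₁ + 1)) = m by omega] at this
      omega
    -- at m₁, a scheduled step with pend (m₁+1) ≠ []
    have hne1 : B.pend (m₁ + 1) ≠ [] := hnotP (m₁ + 1) (by omega) (by omega)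
    rcases B.hstep m₁ with ⟨x, a, ψ, y, rest, h1, _⟩ | ⟨hpe, j, hj1, hj2, hj3, hbr⟩
    · rw [hPm₁.2] at h1; simp at h1
    · rcases hbr with ⟨hin, hsr, hst, hpd⟩ |
        ⟨hnin, hin, ⟨a, ψ, hform, y, rest, hnd, hiff, hrn, hpd, hst⟩ | ⟨hnb, hsr, hst, hpd⟩⟩
      · exact absurd hpd hne1
      · have hre : rest ≠ [] := by rw [← hpd]; exact hne1
        rw [if_neg hre] at hst
        have hjj : j = j₀ := by omega
        subst hjj
        exact ⟨m₁, hPm₁.1, Or.inr ⟨hnin, hin,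
          Or.inl ⟨a, ψ, hform, y, rest, fun z => hiff z, hrn, hpd, by rw [hst, if_neg hre]⟩⟩⟩
      · exact absurd hpd hne1

end Branch

lemma nonatomic_and {φ ψ : PDLFormula} : (PDLFormula.and φ ψ).isNonAtomic := by
  simp [PDLFormula.isNonAtomic, PDLFormula.isAtomic]
lemma nonatomic_or {φ ψ : PDLFormula} : (PDLFormula.or φ ψ).isNonAtomic := by
  simp [PDLFormula.isNonAtomic, PDLFormula.isAtomic]
lemma nonatomic_imp {φ ψ : PDLFormula} : (PDLFormula.imp φ ψ).isNonAtomic := by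
  simp [PDLFormula.isNonAtomic, PDLFormula.isAtomic]
lemma nonatomic_box {α : PDLProgram} {φ : PDLFormula} : (PDLFormula.box α φ).isNonAtomic := by
  simp [PDLFormula.isNonAtomic, PDLFormula.isAtomic]

namespace Branch

lemma princ_suc (B : Branch) {x : Label} {φ : PDLFormula} {n : ℕ}
    (h : SeqElem.lab x φ ∈ (B.S n).suc) (hna : φ.isNonAtomic) :
    ∃ m, n ≤ m ∧ SeqElem.lab x φ ∈ (B.S m).suc ∧ schedRuleSuc x φ (B.S m) (B.r m) := by
  obtain ⟨j₀, hj₀, hσj⟩ := B.hσ.2 x φ hna (B.st n + 1)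
  have happ : ∀ m, n ≤ m → SchedApplies (B.σ j₀).1 (B.σ j₀).2 (B.S m) := by
    intro m hm
    simp only [hσj]
    exact Or.inl ((B.mono hm).2 h)
  obtain ⟨m, hm, hch⟩ := B.select (by omega) happ
  rcases hch with ⟨hin, hsr⟩ | ⟨hnin, _⟩
  · simp only [hσj] at hin hsr
    exact ⟨m, hm, hin, hsr⟩
  · simp only [hσj] at hnin
    exact absurd ((B.mono hm).2 h) hnin

lemma princ_ant (B : Branch) {x : Label} {φ : PDLFormula} {n : ℕ}
    (h : SeqElem.lab x φ ∈ (B.S n).ant) (hna : φ.isNonAtomic)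
    (hnb : ∀ a ψ, φ ≠ PDLFormula.box (PDLProgram.atom a) ψ) :
    ∃ m, n ≤ m ∧ SeqElem.lab x φ ∈ (B.S m).ant ∧ schedRuleAnt x φ (B.S m) (B.r m) := by
  obtain ⟨j₀, hj₀, hσj⟩ := B.hσ.2 x φ hna (B.st n + 1)
  have happ : ∀ m, n ≤ m → SchedApplies (B.σ j₀).1 (B.σ j₀).2 (B.S m) := by
    intro m hm
    simp only [hσj]
    refine Or.inr ⟨(B.mono hm).1 h, ?_⟩
    cases φ with
    | bot => trivial
    | atom p => trivial
    | and _ _ => trivial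
    | or _ _ => trivial
    | imp _ _ => trivial
    | box α ψ =>
        cases α with
        | atom a => exact absurd rfl (hnb a ψ)
        | comp _ _ => trivial
        | choice _ _ => trivial
        | test _ => trivial
        | star _ => trivial
  obtain ⟨m, hm, hch⟩ := B.select (by omega) happ
  rcases hch with ⟨hin, _⟩ | ⟨hnin, hinant, hrest⟩
  · simp only [hσj] at hin
    exact absurd (B.hnc m (Or.inr ⟨_, (B.mono hm).1 h, hin⟩)) (fun h => h)
  · rcases hrest with ⟨a, ψ, hform, _⟩ | ⟨_, hsr⟩
    · rw [hσj] at hform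
      exact absurd hform (hnb a ψ)
    · simp only [hσj] at hsr hinant
      exact ⟨m, hm, hinant, hsr⟩

lemma chain_walk (B : Branch) {x : Label} {a : ℕ} {ψ : PDLFormula} :
    ∀ (rest : List Label) (k : ℕ), B.pend k = rest →
    B.σ (B.st k) = (x, PDLFormula.box (PDLProgram.atom a) ψ) →
    ∀ w ∈ rest, ∃ m, SeqElem.lab w ψ ∈ (B.S m).ant := by
  intro rest
  induction rest with
  | nil => intro k _ _ w hw; simp at hw
  | cons w₀ rest ih =>
      intro k hp hσ w hw
      rcases B.hstep k with ⟨x₁, a₁, ψ₁, y₁, rest₁, h1, h2, h3, h4, hrn, h6, h7⟩ |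
        ⟨hpe, _⟩
      · rw [hp] at h1
        injection h1 with e1 e2
        subst e1; subst e2
        rw [hσ] at h2
        have hx : x₁ = x ∧ a₁ = a ∧ ψ₁ = ψ := by
          have e1 : x = x₁ := congrArg Prod.fst h2
          have e2 : PDLFormula.box (PDLProgram.atom a) ψ =
              PDLFormula.box (PDLProgram.atom a₁) ψ₁ := congrArg Prod.snd h2
          injection e2 with e3 e4
          injection e3 with e5
          exact ⟨e1.symm, e5.symm, e4.symm⟩
        obtain ⟨rfl, rfl, rfl⟩ := hx
        have hp' := B.hprem k
        rw [hrn] at hp'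
        have hSk1 := singleton_prem hp'
        rcases List.mem_cons.mp hw with rfl | hw'
        · exact ⟨k+1, by rw [hSk1]; simp⟩
        · by_cases hre : rest = []
          · subst hre; simp at hw'
          · refine ih (k+1) h6 ?_ w hw'
            rw [h7, if_neg hre]
            exact hσ
      · rw [hp] at hpe; simp at hpe

lemma satL_boxAtom (B : Branch) {x y : Label} {a : ℕ} {ψ : PDLFormula}
    (h1 : SeqElem.lab x (PDLFormula.box (PDLProgram.atom a) ψ) ∈ B.Gb)
    (h2 : SeqElem.rel x a y ∈ B.Gb) :
    SeqElem.lab y ψ ∈ B.Gb := by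
  obtain ⟨n₁, hn₁⟩ := h1
  obtain ⟨n₂, hn₂⟩ := h2
  set n := max n₁ n₂ with hn
  have hn₁' : SeqElem.lab x (PDLFormula.box (PDLProgram.atom a) ψ) ∈ (B.S n).ant :=
    (B.mono (le_max_left _ _)).1 hn₁
  have hn₂' : SeqElem.rel x a y ∈ (B.S n).ant := (B.mono (le_max_right _ _)).1 hn₂
  obtain ⟨j₀, hj₀, hσj⟩ := B.hσ.2 x (PDLFormula.box (PDLProgram.atom a) ψ)
    nonatomic_box (B.st n + 1)
  have happ : ∀ m, n ≤ m → SchedApplies (B.σ j₀).1 (B.σ j₀).2 (B.S m) := by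
    intro m hm
    simp only [hσj]
    exact Or.inr ⟨(B.mono hm).1 hn₁', ⟨y, (B.mono hm).1 hn₂'⟩⟩
  obtain ⟨m, hm, hch⟩ := B.select (by omega) happ
  rcases hch with ⟨hin, _⟩ | ⟨hnin, hinant, hrest⟩
  · simp only [hσj] at hin
    exact absurd (B.hnc m (Or.inr ⟨_, (B.mono hm).1 hn₁', hin⟩)) (fun h => h)
  · rcases hrest with ⟨a', ψ', hform, y₁, rest, hiff, hrn, hpd, hst⟩ | ⟨hnb, _⟩
    · rw [hσj] at hform
      have ha : a' = a ∧ ψ' = ψ := by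
        injection hform with e3 e4
        injection e3 with e5
        exact ⟨e5.symm, e4.symm⟩
      obtain ⟨rfl, rfl⟩ := ha
      simp only [hσj] at hiff hrn
      have hymem : y ∈ y₁ :: rest := (hiff y).mpr ((B.mono hm).1 hn₂')
      have hp' := B.hprem m
      rw [hrn] at hp'
      have hSm1 := singleton_prem hp'
      rcases List.mem_cons.mp hymem with rfl | hy'
      · exact ⟨m+1, by rw [hSm1]; simp⟩
      · by_cases hre : rest = []
        · subst hre; simp at hy'
        · refine B.chain_walk (x := x) (a := a') rest (m+1) hpd ?_ y hy'
          rw [hst, if_neg hre]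
          exact hσj
    · rw [hσj] at hnb
      exact absurd rfl (hnb a ψ)

lemma satL_and (B : Branch) {x : Label} {φ ψ : PDLFormula}
    (h : SeqElem.lab x (PDLFormula.and φ ψ) ∈ B.Gb) :
    SeqElem.lab x φ ∈ B.Gb ∧ SeqElem.lab x ψ ∈ B.Gb := by
  obtain ⟨n, hn⟩ := h
  obtain ⟨m, _, _, hsr⟩ := B.princ_ant hn nonatomic_and (by intro a ψ' h; simp at h)
  simp only [schedRuleAnt] at hsr
  have hp := B.hprem m; rw [hsr] at hp
  have hS := singleton_prem hp
  exact ⟨⟨m+1, by rw [hS]; simp⟩, ⟨m+1, by rw [hS]; simp⟩⟩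

lemma satL_or (B : Branch) {x : Label} {φ ψ : PDLFormula}
    (h : SeqElem.lab x (PDLFormula.or φ ψ) ∈ B.Gb) :
    SeqElem.lab x φ ∈ B.Gb ∨ SeqElem.lab x ψ ∈ B.Gb := by
  obtain ⟨n, hn⟩ := h
  obtain ⟨m, _, _, hsr⟩ := B.princ_ant hn nonatomic_or (by intro a ψ' h; simp at h)
  simp only [schedRuleAnt] at hsr
  have hp := B.hprem m; rw [hsr] at hp
  rcases pair_prem hp with ⟨_, hS⟩ | ⟨_, hS⟩
  · exact Or.inl ⟨m+1, by rw [hS]; simp⟩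
  · exact Or.inr ⟨m+1, by rw [hS]; simp⟩

lemma satL_imp (B : Branch) {x : Label} {φ ψ : PDLFormula}
    (h : SeqElem.lab x (PDLFormula.imp φ ψ) ∈ B.Gb) :
    SeqElem.lab x φ ∈ B.Db ∨ SeqElem.lab x ψ ∈ B.Gb := by
  obtain ⟨n, hn⟩ := h
  obtain ⟨m, _, _, hsr⟩ := B.princ_ant hn nonatomic_imp (by intro a ψ' h; simp at h)
  simp only [schedRuleAnt] at hsr
  have hp := B.hprem m; rw [hsr] at hp
  rcases pair_prem hp with ⟨_, hS⟩ | ⟨_, hS⟩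
  · exact Or.inl ⟨m+1, by rw [hS]; simp⟩
  · exact Or.inr ⟨m+1, by rw [hS]; simp⟩

lemma satL_comp (B : Branch) {x : Label} {α β : PDLProgram} {ψ : PDLFormula}
    (h : SeqElem.lab x (PDLFormula.box (PDLProgram.comp α β) ψ) ∈ B.Gb) :
    SeqElem.lab x (PDLFormula.box α (PDLFormula.box β ψ)) ∈ B.Gb := by
  obtain ⟨n, hn⟩ := h
  obtain ⟨m, _, _, hsr⟩ := B.princ_ant hn nonatomic_box (by intro a ψ' h; simp at h)
  simp only [schedRuleAnt] at hsr
  have hp := B.hprem m; rw [hsr] at hp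
  have hS := singleton_prem hp
  exact ⟨m+1, by rw [hS]; simp⟩

lemma satL_choice (B : Branch) {x : Label} {α β : PDLProgram} {ψ : PDLFormula}
    (h : SeqElem.lab x (PDLFormula.box (PDLProgram.choice α β) ψ) ∈ B.Gb) :
    SeqElem.lab x (PDLFormula.box α ψ) ∈ B.Gb ∧
    SeqElem.lab x (PDLFormula.box β ψ) ∈ B.Gb := by
  obtain ⟨n, hn⟩ := h
  obtain ⟨m, _, _, hsr⟩ := B.princ_ant hn nonatomic_box (by intro a ψ' h; simp at h)
  simp only [schedRuleAnt] at hsr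
  have hp := B.hprem m; rw [hsr] at hp
  have hS := singleton_prem hp
  exact ⟨⟨m+1, by rw [hS]; simp⟩, ⟨m+1, by rw [hS]; simp⟩⟩

lemma satL_test (B : Branch) {x : Label} {χ ψ : PDLFormula}
    (h : SeqElem.lab x (PDLFormula.box (PDLProgram.test χ) ψ) ∈ B.Gb) :
    SeqElem.lab x χ ∈ B.Db ∨ SeqElem.lab x ψ ∈ B.Gb := by
  obtain ⟨n, hn⟩ := h
  obtain ⟨m, _, _, hsr⟩ := B.princ_ant hn nonatomic_box (by intro a ψ' h; simp at h)
  simp only [schedRuleAnt] at hsr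
  have hp := B.hprem m; rw [hsr] at hp
  rcases pair_prem hp with ⟨_, hS⟩ | ⟨_, hS⟩
  · exact Or.inl ⟨m+1, by rw [hS]; simp⟩
  · exact Or.inr ⟨m+1, by rw [hS]; simp⟩

lemma satL_star (B : Branch) {x : Label} {α : PDLProgram} {ψ : PDLFormula}
    (h : SeqElem.lab x (PDLFormula.box (PDLProgram.star α) ψ) ∈ B.Gb) :
    SeqElem.lab x ψ ∈ B.Gb ∧
    SeqElem.lab x (PDLFormula.box α (PDLFormula.box (PDLProgram.star α) ψ)) ∈ B.Gb := by
  obtain ⟨n, hn⟩ := h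
  obtain ⟨m, _, _, hsr⟩ := B.princ_ant hn nonatomic_box (by intro a ψ' h; simp at h)
  simp only [schedRuleAnt] at hsr
  have hp := B.hprem m; rw [hsr] at hp
  have hS := singleton_prem hp
  exact ⟨⟨m+1, by rw [hS]; simp⟩, ⟨m+1, by rw [hS]; simp⟩⟩

lemma satR_and (B : Branch) {x : Label} {φ ψ : PDLFormula}
    (h : SeqElem.lab x (PDLFormula.and φ ψ) ∈ B.Db) :
    SeqElem.lab x φ ∈ B.Db ∨ SeqElem.lab x ψ ∈ B.Db := by
  obtain ⟨n, hn⟩ := h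
  obtain ⟨m, _, _, hsr⟩ := B.princ_suc hn nonatomic_and
  simp only [schedRuleSuc] at hsr
  have hp := B.hprem m; rw [hsr] at hp
  rcases pair_prem hp with ⟨_, hS⟩ | ⟨_, hS⟩
  · exact Or.inl ⟨m+1, by rw [hS]; simp⟩
  · exact Or.inr ⟨m+1, by rw [hS]; simp⟩

lemma satR_or (B : Branch) {x : Label} {φ ψ : PDLFormula}
    (h : SeqElem.lab x (PDLFormula.or φ ψ) ∈ B.Db) :
    SeqElem.lab x φ ∈ B.Db ∧ SeqElem.lab x ψ ∈ B.Db := by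
  obtain ⟨n, hn⟩ := h
  obtain ⟨m, _, _, hsr⟩ := B.princ_suc hn nonatomic_or
  simp only [schedRuleSuc] at hsr
  have hp := B.hprem m; rw [hsr] at hp
  have hS := singleton_prem hp
  exact ⟨⟨m+1, by rw [hS]; simp⟩, ⟨m+1, by rw [hS]; simp⟩⟩

lemma satR_imp (B : Branch) {x : Label} {φ ψ : PDLFormula}
    (h : SeqElem.lab x (PDLFormula.imp φ ψ) ∈ B.Db) :
    SeqElem.lab x φ ∈ B.Gb ∧ SeqElem.lab x ψ ∈ B.Db := by
  obtain ⟨n, hn⟩ := h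
  obtain ⟨m, _, _, hsr⟩ := B.princ_suc hn nonatomic_imp
  simp only [schedRuleSuc] at hsr
  have hp := B.hprem m; rw [hsr] at hp
  have hS := singleton_prem hp
  exact ⟨⟨m+1, by rw [hS]; simp⟩, ⟨m+1, by rw [hS]; simp⟩⟩

end Branch

namespace Branch

def TP (B : Branch) (k : ℕ) (τ τ' : TraceValue) : Prop :=
  RuleApp.tracePair (B.r k) (B.f k) τ τ'
def PP (B : Branch) (k : ℕ) (τ τ' : TraceValue) : Prop :=
  RuleApp.progressing (B.r k) (B.f k) τ τ'

def Seg (B : Branch) (n m : ℕ) (τ ρ : TraceValue) : Prop :=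
  n ≤ m ∧ ∃ g : ℕ → TraceValue, g n = τ ∧ g m = ρ ∧
    ∀ k, n ≤ k → k < m → B.TP k (g k) (g (k+1))

def SegP (B : Branch) (n m : ℕ) (τ ρ : TraceValue) : Prop :=
  n ≤ m ∧ ∃ g : ℕ → TraceValue, g n = τ ∧ g m = ρ ∧
    (∀ k, n ≤ k → k < m → B.TP k (g k) (g (k+1))) ∧
    ∃ i, n ≤ i ∧ i < m ∧ B.PP i (g i) (g (i+1))

lemma Seg.refl (B : Branch) (n : ℕ) (τ : TraceValue) : B.Seg n n τ τ :=
  ⟨le_rfl, fun _ => τ, rfl, rfl, fun k h1 h2 => by omega⟩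

lemma seg_glue_fun {n m m' : ℕ} (g₁ g₂ : ℕ → TraceValue) (hm : n ≤ m) (hm' : m ≤ m')
    (hagree : g₁ m = g₂ m) :
    ∃ g : ℕ → TraceValue, (∀ k, k ≤ m → g k = g₁ k) ∧ (∀ k, m ≤ k → g k = g₂ k) := by
  refine ⟨fun k => if k < m then g₁ k else g₂ k, fun k hk => ?_, fun k hk => ?_⟩
  · by_cases h : k < m
    · simp [h]
    · have : k = m := by omega
      subst this; simp [hagree]
  · have : ¬ (k < m) := by omega
    simp [this]

lemma Seg.trans {B : Branch} {n m m' : ℕ} {τ ρ χ : TraceValue}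
    (h1 : B.Seg n m τ ρ) (h2 : B.Seg m m' ρ χ) : B.Seg n m' τ χ := by
  obtain ⟨hnm, g₁, hg₁n, hg₁m, hstep₁⟩ := h1
  obtain ⟨hmm', g₂, hg₂m, hg₂m', hstep₂⟩ := h2
  obtain ⟨g, hle, hge⟩ := seg_glue_fun g₁ g₂ hnm hmm' (hg₁m.trans hg₂m.symm)
  refine ⟨by omega, g, by rw [hle n hnm]; exact hg₁n, by rw [hge m' hmm']; exact hg₂m', ?_⟩
  intro k hk1 hk2
  by_cases h : k < m
  · rw [hle k (by omega), hle (k+1) (by omega)]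
    exact hstep₁ k hk1 h
  · rw [hge k (by omega), hge (k+1) (by omega)]
    exact hstep₂ k (by omega) hk2

lemma SegP.trans_left {B : Branch} {n m m' : ℕ} {τ ρ χ : TraceValue}
    (h1 : B.SegP n m τ ρ) (h2 : B.Seg m m' ρ χ) : B.SegP n m' τ χ := by
  obtain ⟨hnm, g₁, hg₁n, hg₁m, hstep₁, i, hi1, hi2, hip⟩ := h1
  obtain ⟨hmm', g₂, hg₂m, hg₂m', hstep₂⟩ := h2
  obtain ⟨g, hle, hge⟩ := seg_glue_fun g₁ g₂ hnm hmm' (hg₁m.trans hg₂m.symm)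
  refine ⟨by omega, g, by rw [hle n hnm]; exact hg₁n, by rw [hge m' hmm']; exact hg₂m', ?_, ?_⟩
  · intro k hk1 hk2
    by_cases h : k < m
    · rw [hle k (by omega), hle (k+1) (by omega)]
      exact hstep₁ k hk1 h
    · rw [hge k (by omega), hge (k+1) (by omega)]
      exact hstep₂ k (by omega) hk2
  · refine ⟨i, hi1, by omega, ?_⟩
    rw [hle i (by omega), hle (i+1) (by omega)]
    exact hip

lemma Seg.trans_P {B : Branch} {n m m' : ℕ} {τ ρ χ : TraceValue}
    (h1 : B.Seg n m τ ρ) (h2 : B.SegP m m' ρ χ) : B.SegP n m' τ χ := by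
  obtain ⟨hnm, g₁, hg₁n, hg₁m, hstep₁⟩ := h1
  obtain ⟨hmm', g₂, hg₂m, hg₂m', hstep₂, i, hi1, hi2, hip⟩ := h2
  obtain ⟨g, hle, hge⟩ := seg_glue_fun g₁ g₂ hnm hmm' (hg₁m.trans hg₂m.symm)
  refine ⟨by omega, g, by rw [hle n hnm]; exact hg₁n, by rw [hge m' hmm']; exact hg₂m', ?_, ?_⟩
  · intro k hk1 hk2
    by_cases h : k < m
    · rw [hle k (by omega), hle (k+1) (by omega)]
      exact hstep₁ k hk1 h
    · rw [hge k (by omega), hge (k+1) (by omega)]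
      exact hstep₂ k (by omega) hk2
  · refine ⟨i, by omega, hi2, ?_⟩
    rw [hge i (by omega), hge (i+1) (by omega)]
    exact hip

lemma one_step (B : Branch) {n : ℕ} {τ τ' : TraceValue} (h : B.TP n τ τ') :
    B.Seg n (n+1) τ τ' := by
  refine ⟨by omega, fun k => if k = n then τ else τ', by simp, by simp, ?_⟩
  intro k h1 h2
  have : k = n := by omega
  subst this
  simpa using h

lemma one_step_P (B : Branch) {n : ℕ} {τ τ' : TraceValue} (h : B.TP n τ τ')
    (hp : B.PP n τ τ') : B.SegP n (n+1) τ τ' := by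
  refine ⟨by omega, fun k => if k = n then τ else τ', by simp, by simp, ?_, n, le_rfl, by omega, ?_⟩
  · intro k h1 h2
    have : k = n := by omega
    subst this
    simpa using h
  · simpa using hp

end Branch

lemma tp_const_suc {x : Label} {φ : PDLFormula} {S : Sequent} {r : RuleApp} {i : ℕ}
    {τ : TraceValue} (h : schedRuleSuc x φ S r) (hi : i < r.prems.length)
    (hm : τ.toElem ∈ S.suc) : RuleApp.tracePair r i τ τ := by
  cases φ with
  | bot => simp [schedRuleSuc] at h
  | atom p => simp [schedRuleSuc] at h
  | and φ ψ =>
      simp only [schedRuleSuc] at h; subst h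
      simp only [RuleApp.prems, List.length] at hi
      exact ⟨hi, hm, rfl⟩
  | or φ ψ =>
      simp only [schedRuleSuc] at h; subst h
      simp only [RuleApp.prems, List.length] at hi
      exact ⟨by omega, hm, rfl⟩
  | imp φ ψ =>
      simp only [schedRuleSuc] at h; subst h
      simp only [RuleApp.prems, List.length] at hi
      exact ⟨by omega, hm, rfl⟩
  | box α ψ =>
      cases α with
      | atom a =>
          simp only [schedRuleSuc] at h
          obtain ⟨y, rfl⟩ := h
          simp only [RuleApp.prems, List.length] at hi
          exact ⟨by omega, Or.inl ⟨hm, rfl⟩⟩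
      | comp α β =>
          simp only [schedRuleSuc] at h; subst h
          simp only [RuleApp.prems, List.length] at hi
          exact ⟨by omega, Or.inl ⟨hm, rfl⟩⟩
      | choice α β =>
          simp only [schedRuleSuc] at h; subst h
          simp only [RuleApp.prems, List.length] at hi
          exact ⟨hi, Or.inl ⟨hm, rfl⟩⟩
      | test χ =>
          simp only [schedRuleSuc] at h; subst h
          simp only [RuleApp.prems, List.length] at hi
          exact ⟨by omega, Or.inl ⟨hm, rfl⟩⟩
      | star α =>
          simp only [schedRuleSuc] at h; subst h
          simp only [RuleApp.prems, List.length] at hi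
          show (i = 0 ∧ _) ∨ (i = 1 ∧ _)
          rcases Nat.lt_or_ge i 1 with h1 | h1
          · exact Or.inl ⟨by omega, Or.inl ⟨hm, rfl⟩⟩
          · exact Or.inr ⟨by omega, Or.inl ⟨hm, rfl⟩⟩

lemma tp_const_ant {x : Label} {φ : PDLFormula} {S : Sequent} {r : RuleApp} {i : ℕ}
    {τ : TraceValue} (h : schedRuleAnt x φ S r) (hi : i < r.prems.length)
    (hm : τ.toElem ∈ S.suc) : RuleApp.tracePair r i τ τ := by
  cases φ with
  | bot => simp [schedRuleAnt] at h
  | atom p => simp [schedRuleAnt] at h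
  | and φ ψ =>
      simp only [schedRuleAnt] at h; subst h
      exact ⟨by simp only [RuleApp.prems, List.length] at hi; omega, hm, rfl⟩
  | or φ ψ =>
      simp only [schedRuleAnt] at h; subst h
      simp only [RuleApp.prems, List.length] at hi
      exact ⟨hi, hm, rfl⟩
  | imp φ ψ =>
      simp only [schedRuleAnt] at h; subst h
      simp only [RuleApp.prems, List.length] at hi
      exact ⟨hi, hm, rfl⟩
  | box α ψ =>
      cases α with
      | atom a => simp [schedRuleAnt] at h
      | comp α β =>
          simp only [schedRuleAnt] at h; subst h
          exact ⟨by simp only [RuleApp.prems, List.length] at hi; omega, hm, rfl⟩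
      | choice α β =>
          simp only [schedRuleAnt] at h; subst h
          exact ⟨by simp only [RuleApp.prems, List.length] at hi; omega, hm, rfl⟩
      | test χ =>
          simp only [schedRuleAnt] at h; subst h
          simp only [RuleApp.prems, List.length] at hi
          exact ⟨hi, hm, rfl⟩
      | star α =>
          simp only [schedRuleAnt] at h; subst h
          exact ⟨by simp only [RuleApp.prems, List.length] at hi; omega, hm, rfl⟩

namespace Branch

lemma tp_const (B : Branch) {k : ℕ} {τ : TraceValue}
    (h : τ.toElem ∈ (B.S k).suc) : B.TP k τ τ := by
  have hlt := getElem?_lt (B.hprem k)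
  unfold TP
  rcases B.hstep k with ⟨x, a, ψ, y, rest, _, _, _, _, hrn, _, _⟩ |
    ⟨_, j, _, _, _, hbr⟩
  · rw [hrn] at hlt ⊢
    simp only [RuleApp.prems, List.length] at hlt
    exact ⟨by omega, h, rfl⟩
  · rcases hbr with ⟨_, hsr, _, _⟩ |
      ⟨_, _, ⟨a, ψ, _, y, rest, _, _, hrn, _, _⟩ | ⟨_, hsr, _, _⟩⟩
    · exact tp_const_suc hsr hlt h
    · rw [hrn] at hlt ⊢
      simp only [RuleApp.prems, List.length] at hlt
      exact ⟨by omega, h, rfl⟩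
    · exact tp_const_ant hsr hlt h

lemma wait (B : Branch) {n m : ℕ} {τ : TraceValue}
    (h : τ.toElem ∈ (B.S n).suc) (hnm : n ≤ m) : B.Seg n m τ τ :=
  ⟨hnm, fun _ => τ, rfl, rfl, fun k h1 _ => B.tp_const ((B.mono h1).2 h)⟩

lemma glue (B : Branch) (ns : ℕ → ℕ) (τs : ℕ → TraceValue)
    (hseg : ∀ k, B.SegP (ns k) (ns (k+1)) (τs k) (τs (k+1)))
    (hlt : ∀ k, ns k < ns (k+1)) : False := by
  apply B.huntrace
  choose g hg1 hg2 hprops using fun k => (hseg k).2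
  have hns_mono : ∀ {k l : ℕ}, k ≤ l → ns k ≤ ns l := by
    intro k l h
    induction l with
    | zero => simp_all
    | succ l ih =>
        rcases Nat.lt_or_ge k (l+1) with h' | h'
        · exact le_trans (ih (by omega)) (le_of_lt (hlt l))
        · have : k = l + 1 := by omega
          subst this; exact le_rfl
  have hns_ge : ∀ k, ns 0 + k ≤ ns k := by
    intro k
    induction k with
    | zero => omega
    | succ k ih => have := hlt k; omega
  set K : ℕ → ℕ := fun t => Nat.findGreatest (fun k => ns k ≤ t) t with hK
  have hKspec : ∀ t, ns 0 ≤ t → ns (K t) ≤ t ∧ t < ns (K t + 1) := by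
    intro t ht
    have h1 : ns (K t) ≤ t := by
      have := Nat.findGreatest_spec (P := fun k => ns k ≤ t) (Nat.zero_le t) ht
      exact this
    refine ⟨h1, ?_⟩
    by_cases h2 : K t + 1 ≤ t
    · by_contra hcon
      push_neg at hcon
      exact Nat.findGreatest_is_greatest (P := fun k => ns k ≤ t)
        (Nat.lt_succ_self _) h2 hcon
    · have := hns_ge (K t + 1)
      omega
  have hKval : ∀ k t, ns k ≤ t → t < ns (k+1) → K t = k := by
    intro k t h1 h2
    have ht0 : ns 0 ≤ t := le_trans (hns_mono (Nat.zero_le k)) h1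
    obtain ⟨ha, hb⟩ := hKspec t ht0
    rcases Nat.lt_trichotomy (K t) k with h | h | h
    · have : ns (K t + 1) ≤ ns k := hns_mono (by omega)
      omega
    · exact h
    · have : ns (k+1) ≤ ns (K t) := hns_mono (by omega)
      omega
  set G : ℕ → TraceValue := fun t => g (K t) t with hG
  have hGstep : ∀ k t, ns k ≤ t → t < ns (k+1) →
      G t = g k t ∧ G (t+1) = g k (t+1) := by
    intro k t h1 h2
    constructor
    · rw [hG]; simp only
      rw [hKval k t h1 h2]
    · rw [hG]; simp only
      by_cases h3 : t + 1 < ns (k+1)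
      · rw [hKval k (t+1) (by omega) h3]
      · have ht1 : t + 1 = ns (k+1) := by omega
        rw [hKval (k+1) (t+1) (by omega) (by have := hlt (k+1); omega)]
        rw [ht1, hg2 k, (hg1 (k+1)).symm]
  refine ⟨ns 0, fun t => G (ns 0 + t), ?_, ?_⟩
  · intro t
    refine ⟨B.r (ns 0 + t), B.hrule _, ?_⟩
    set u := ns 0 + t with hu
    have hu0 : ns 0 ≤ u := by omega
    have hk := hKspec u hu0
    obtain ⟨hGa, hGb⟩ := hGstep (K u) u hk.1 hk.2
    have : G u = G (ns 0 + t) := by rw [hu]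
    show RuleApp.tracePair _ (B.f u) (G u) (G (u + 1))
    rw [hGa, hGb]
    exact (hprops (K u)).1 u hk.1 hk.2
  · intro m
    obtain ⟨i, hi1, hi2, hip⟩ := (hprops m).2
    refine ⟨i - ns 0, ?_, B.r i, ?_, ?_⟩
    · have := hns_ge m; omega
    · have : ns 0 + (i - ns 0) = i := by
        have := hns_ge m; omega
      rw [this]; exact B.hrule i
    · have hie : ns 0 + (i - ns 0) = i := by
        have := hns_ge m; omega
      obtain ⟨hGa, hGb⟩ := hGstep m i hi1 hi2
      show RuleApp.progressing _ (B.f _) (G (ns 0 + (i - ns 0))) (G (ns 0 + (i - ns 0) + 1))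
      rw [hie, hGa, hGb]
      exact hip

end Branch

lemma dc {α : Type*} (R : α → α → Prop) (a : α) (h : ∀ x, ∃ y, R x y) :
    ∃ g : ℕ → α, g 0 = a ∧ ∀ n, R (g n) (g (n+1)) := by
  choose F hF using h
  refine ⟨fun n => F^[n] a, rfl, fun n => ?_⟩
  show R (F^[n] a) (F^[n+1] a)
  rw [Function.iterate_succ_apply']
  exact hF _

def mB (B : Branch) : PDLModel := templateModel B.Gb

/-- The induction hypothesis: soundness of the template for all formulas of size `< N`. -/
def OK (B : Branch) (N : ℕ) : Prop :=
  ∀ χ : PDLFormula, sizeF χ < N →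
    (∀ x : Label, SeqElem.lab x χ ∈ B.Gb → x ∈ PDLFormula.sem (mB B) χ) ∧
    (∀ x : Label, SeqElem.lab x χ ∈ B.Db → x ∉ PDLFormula.sem (mB B) χ)

lemma OK_mono {B : Branch} {N M : ℕ} (h : N ≤ M) (hOK : OK B M) : OK B N :=
  fun χ hχ => hOK χ (by omega)

lemma toElem_def (u : Label) (sp : List PDLProgram) (δ₀ : PDLProgram) (χ₀ : PDLFormula) :
    (TraceValue.mk u sp δ₀ χ₀).toElem =
      SeqElem.lab u (sp.foldr PDLFormula.box (PDLFormula.box (PDLProgram.star δ₀) χ₀)) := rfl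

lemma sizeP_pos : ∀ γ : PDLProgram, 0 < sizeP γ := by
  intro γ
  cases γ <;> simp [sizeP]

lemma consume_aux (B : Branch) : ∀ (N : ℕ) (γ : PDLProgram), sizeP γ ≤ N → OK B (sizeP γ + 1) →
    ∀ (θ : PDLFormula) (u : Label) (n : ℕ),
    SeqElem.lab u (PDLFormula.box γ θ) ∈ (B.S n).suc →
    ∃ m z, n ≤ m ∧ (u, z) ∈ PDLProgram.sem (mB B) γ ∧
      SeqElem.lab z θ ∈ (B.S m).suc ∧
      ∀ (sp : List PDLProgram) (δ₀ : PDLProgram) (χ₀ : PDLFormula),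
        sp.foldr PDLFormula.box (PDLFormula.box (PDLProgram.star δ₀) χ₀) = θ →
        B.Seg n m ⟨u, γ :: sp, δ₀, χ₀⟩ ⟨z, sp, δ₀, χ₀⟩ := by
  intro N
  induction N with
  | zero =>
      intro γ hγ
      exact absurd hγ (by have := sizeP_pos γ; omega)
  | succ N ihN =>
  intro γ hγ
  cases γ with
  | atom a =>
      intro _ θ u n h
      obtain ⟨m, hm, hmem, hsr⟩ := B.princ_suc h nonatomic_box
      simp only [schedRuleSuc] at hsr
      obtain ⟨y, hrn⟩ := hsr
      have hp := B.hprem m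
      rw [hrn] at hp
      have hf0 : B.f m = 0 := by
        have := getElem?_lt hp; simp only [RuleApp.prems, List.length] at this; omega
      have hS := singleton_prem hp
      refine ⟨m+1, y, by omega, ?_, by rw [hS]; simp, ?_⟩
      · show SeqElem.rel u a y ∈ B.Gb
        exact ⟨m+1, by rw [hS]; simp⟩
      · intro sp δ₀ χ₀ hbr
        have hwait : B.Seg n m ⟨u, PDLProgram.atom a :: sp, δ₀, χ₀⟩
            ⟨u, PDLProgram.atom a :: sp, δ₀, χ₀⟩ := by
          refine B.wait ?_ hm
          rw [toElem_def, List.foldr_cons, hbr]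
          exact h
        refine hwait.trans (B.one_step ?_)
        unfold Branch.TP
        rw [hrn, hf0]
        exact ⟨rfl, Or.inr ⟨by rw [toElem_def, hbr], rfl⟩⟩
  | comp α β =>
      intro hOK θ u n h
      obtain ⟨m, hm, hmem, hsr⟩ := B.princ_suc h nonatomic_box
      simp only [schedRuleSuc] at hsr
      have hp := B.hprem m
      rw [hsr] at hp
      have hf0 : B.f m = 0 := by
        have := getElem?_lt hp; simp only [RuleApp.prems, List.length] at this; omega
      have hS := singleton_prem hp
      have hγ' : sizeP α + sizeP β + 1 ≤ N + 1 := by simpa [sizeP] using hγ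
      have hα := ihN α (by have := sizeP_pos β; omega)
        (OK_mono (by simp only [sizeP]; omega) hOK) (PDLFormula.box β θ) u (m+1)
        (by rw [hS]; simp)
      obtain ⟨m₁, z₁, hm₁, hsem₁, hmem₁, hseg₁⟩ := hα
      have hβ := ihN β (by have := sizeP_pos α; omega)
        (OK_mono (by simp only [sizeP]; omega) hOK) θ z₁ m₁ hmem₁
      obtain ⟨m₂, z₂, hm₂, hsem₂, hmem₂, hseg₂⟩ := hβ
      refine ⟨m₂, z₂, by omega, ⟨z₁, hsem₁, hsem₂⟩, hmem₂, ?_⟩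
      intro sp δ₀ χ₀ hbr
      have hwait : B.Seg n m ⟨u, PDLProgram.comp α β :: sp, δ₀, χ₀⟩
          ⟨u, PDLProgram.comp α β :: sp, δ₀, χ₀⟩ := by
        refine B.wait ?_ hm
        rw [toElem_def, List.foldr_cons, hbr]
        exact h
      have hstep : B.Seg m (m+1) ⟨u, PDLProgram.comp α β :: sp, δ₀, χ₀⟩
          ⟨u, α :: β :: sp, δ₀, χ₀⟩ := by
        refine B.one_step ?_
        unfold Branch.TP
        rw [hsr, hf0]
        exact ⟨rfl, Or.inr ⟨⟨u, sp, δ₀, χ₀⟩, by rw [toElem_def, hbr], rfl, rfl⟩⟩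
      have hs₁ := hseg₁ (β :: sp) δ₀ χ₀ (by rw [List.foldr_cons, hbr])
      have hs₂ := hseg₂ sp δ₀ χ₀ hbr
      exact ((hwait.trans hstep).trans hs₁).trans hs₂
  | choice α β =>
      intro hOK θ u n h
      obtain ⟨m, hm, hmem, hsr⟩ := B.princ_suc h nonatomic_box
      simp only [schedRuleSuc] at hsr
      have hp := B.hprem m
      rw [hsr] at hp
      have hγ' : sizeP α + sizeP β + 1 ≤ N + 1 := by simpa [sizeP] using hγ
      rcases pair_prem hp with ⟨hf0, hS⟩ | ⟨hf1, hS⟩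
      · have hα := ihN α (by have := sizeP_pos β; omega)
          (OK_mono (by simp only [sizeP]; omega) hOK) θ u (m+1) (by rw [hS]; simp)
        obtain ⟨m₁, z₁, hm₁, hsem₁, hmem₁, hseg₁⟩ := hα
        refine ⟨m₁, z₁, by omega, Or.inl hsem₁, hmem₁, ?_⟩
        intro sp δ₀ χ₀ hbr
        have hwait : B.Seg n m ⟨u, PDLProgram.choice α β :: sp, δ₀, χ₀⟩
            ⟨u, PDLProgram.choice α β :: sp, δ₀, χ₀⟩ := by
          refine B.wait ?_ hm
          rw [toElem_def, List.foldr_cons, hbr]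
          exact h
        have hstep : B.Seg m (m+1) ⟨u, PDLProgram.choice α β :: sp, δ₀, χ₀⟩
            ⟨u, α :: sp, δ₀, χ₀⟩ := by
          refine B.one_step ?_
          unfold Branch.TP
          rw [hsr, hf0]
          exact ⟨by omega, Or.inr ⟨⟨u, sp, δ₀, χ₀⟩, by rw [toElem_def, hbr], rfl, rfl⟩⟩
        exact (hwait.trans hstep).trans (hseg₁ sp δ₀ χ₀ hbr)
      · have hβ := ihN β (by have := sizeP_pos α; omega)
          (OK_mono (by simp only [sizeP]; omega) hOK) θ u (m+1) (by rw [hS]; simp)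
        obtain ⟨m₁, z₁, hm₁, hsem₁, hmem₁, hseg₁⟩ := hβ
        refine ⟨m₁, z₁, by omega, Or.inr hsem₁, hmem₁, ?_⟩
        intro sp δ₀ χ₀ hbr
        have hwait : B.Seg n m ⟨u, PDLProgram.choice α β :: sp, δ₀, χ₀⟩
            ⟨u, PDLProgram.choice α β :: sp, δ₀, χ₀⟩ := by
          refine B.wait ?_ hm
          rw [toElem_def, List.foldr_cons, hbr]
          exact h
        have hstep : B.Seg m (m+1) ⟨u, PDLProgram.choice α β :: sp, δ₀, χ₀⟩
            ⟨u, β :: sp, δ₀, χ₀⟩ := by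
          refine B.one_step ?_
          unfold Branch.TP
          rw [hsr, hf1]
          exact ⟨by omega, Or.inr ⟨⟨u, sp, δ₀, χ₀⟩, by rw [toElem_def, hbr], rfl, rfl⟩⟩
        exact (hwait.trans hstep).trans (hseg₁ sp δ₀ χ₀ hbr)
  | test χ =>
      intro hOK θ u n h
      obtain ⟨m, hm, hmem, hsr⟩ := B.princ_suc h nonatomic_box
      simp only [schedRuleSuc] at hsr
      have hp := B.hprem m
      rw [hsr] at hp
      have hf0 : B.f m = 0 := by
        have := getElem?_lt hp; simp only [RuleApp.prems, List.length] at this; omega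
      have hS := singleton_prem hp
      refine ⟨m+1, u, by omega, ⟨rfl, ?_⟩, by rw [hS]; simp, ?_⟩
      · exact (hOK χ (by simp only [sizeP]; omega)).1 u ⟨m+1, by rw [hS]; simp⟩
      · intro sp δ₀ χ₀ hbr
        have hwait : B.Seg n m ⟨u, PDLProgram.test χ :: sp, δ₀, χ₀⟩
            ⟨u, PDLProgram.test χ :: sp, δ₀, χ₀⟩ := by
          refine B.wait ?_ hm
          rw [toElem_def, List.foldr_cons, hbr]
          exact h
        refine hwait.trans (B.one_step ?_)
        unfold Branch.TP
        rw [hsr, hf0]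
        exact ⟨rfl, Or.inr ⟨by rw [toElem_def, hbr], rfl⟩⟩
  | star γ =>
      intro hOK θ u n h
      have hγ' : sizeP γ + 1 ≤ N + 1 := by simpa [sizeP] using hγ
      have hOK' : OK B (sizeP γ + 1) := OK_mono (by simp only [sizeP]; omega) hOK
      -- the loop invariant
      set Q : ℕ → Label → Prop := fun k v =>
        n ≤ k ∧ SeqElem.lab v (PDLFormula.box (PDLProgram.star γ) θ) ∈ (B.S k).suc ∧
        Relation.ReflTransGen (fun s t => (s, t) ∈ PDLProgram.sem (mB B) γ) u v ∧
        ∀ (sp : List PDLProgram) (δ₀ : PDLProgram) (χ₀ : PDLFormula),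
          sp.foldr PDLFormula.box (PDLFormula.box (PDLProgram.star δ₀) χ₀) = θ →
          B.Seg n k ⟨u, PDLProgram.star γ :: sp, δ₀, χ₀⟩ ⟨v, PDLProgram.star γ :: sp, δ₀, χ₀⟩
        with hQ
      set Goal : Prop := (∃ m z, n ≤ m ∧ (u, z) ∈ PDLProgram.sem (mB B) (PDLProgram.star γ) ∧
        SeqElem.lab z θ ∈ (B.S m).suc ∧
        ∀ (sp : List PDLProgram) (δ₀ : PDLProgram) (χ₀ : PDLFormula),
          sp.foldr PDLFormula.box (PDLFormula.box (PDLProgram.star δ₀) χ₀) = θ →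
          B.Seg n m ⟨u, PDLProgram.star γ :: sp, δ₀, χ₀⟩ ⟨z, sp, δ₀, χ₀⟩) with hGoal
      show Goal
      have iter : ∀ k v, Q k v → Goal ∨
          ∃ k' v', Q k' v' ∧ k < k' ∧
            B.SegP k k' ⟨v, [], γ, θ⟩ ⟨v', [], γ, θ⟩ := by
        intro k v hQv
        obtain ⟨hkn, hmemk, hrtg, hsegs⟩ := hQv
        obtain ⟨m, hm, hmem, hsr⟩ := B.princ_suc hmemk nonatomic_box
        simp only [schedRuleSuc] at hsr
        have hp := B.hprem m
        rw [hsr] at hp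
        rcases pair_prem hp with ⟨hf0, hS⟩ | ⟨hf1, hS⟩
        · -- left premise: θ reached at v
          left
          rw [hGoal]
          refine ⟨m+1, v, by omega, hrtg, by rw [hS]; simp, ?_⟩
          intro sp δ₀ χ₀ hbr
          have hwait : B.Seg k m ⟨v, PDLProgram.star γ :: sp, δ₀, χ₀⟩
              ⟨v, PDLProgram.star γ :: sp, δ₀, χ₀⟩ := by
            refine B.wait ?_ hm
            rw [toElem_def, List.foldr_cons, hbr]
            exact hmemk
          have hstep : B.Seg m (m+1) ⟨v, PDLProgram.star γ :: sp, δ₀, χ₀⟩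
              ⟨v, sp, δ₀, χ₀⟩ := by
            refine B.one_step ?_
            unfold Branch.TP
            rw [hsr, hf0]
            exact Or.inl ⟨rfl, Or.inr ⟨by rw [toElem_def, hbr], rfl⟩⟩
          exact ((hsegs sp δ₀ χ₀ hbr).trans hwait).trans hstep
        · -- right premise: unfold once and consume γ
          have hih := ihN γ (by omega) hOK' (PDLFormula.box (PDLProgram.star γ) θ) v (m+1)
            (by rw [hS]; simp)
          obtain ⟨m₂, z, hm₂, hsem, hmem₂, hseg₂⟩ := hih
          right
          refine ⟨m₂, z, ⟨by omega, hmem₂, hrtg.tail hsem, ?_⟩, by omega, ?_⟩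
          · intro sp δ₀ χ₀ hbr
            have hwait : B.Seg k m ⟨v, PDLProgram.star γ :: sp, δ₀, χ₀⟩
                ⟨v, PDLProgram.star γ :: sp, δ₀, χ₀⟩ := by
              refine B.wait ?_ hm
              rw [toElem_def, List.foldr_cons, hbr]
              exact hmemk
            have hstep : B.Seg m (m+1) ⟨v, PDLProgram.star γ :: sp, δ₀, χ₀⟩
                ⟨v, γ :: PDLProgram.star γ :: sp, δ₀, χ₀⟩ := by
              refine B.one_step ?_
              unfold Branch.TP
              rw [hsr, hf1]
              exact Or.inr ⟨rfl, Or.inr ⟨by rw [toElem_def, List.foldr_cons, hbr], rfl⟩⟩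
            have hs := hseg₂ (PDLProgram.star γ :: sp) δ₀ χ₀ (by rw [List.foldr_cons, hbr])
            exact (((hsegs sp δ₀ χ₀ hbr).trans hwait).trans hstep).trans hs
          · -- the progressing parallel trace
            have hwait : B.Seg k m ⟨v, [], γ, θ⟩ ⟨v, [], γ, θ⟩ := by
              refine B.wait ?_ hm
              rw [toElem_def, List.foldr_nil]
              exact hmemk
            have hstep : B.SegP m (m+1) ⟨v, [], γ, θ⟩ ⟨v, [γ], γ, θ⟩ := by
              refine B.one_step_P ?_ ?_
              · unfold Branch.TP
                rw [hsr, hf1]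
                exact Or.inr ⟨rfl, Or.inr ⟨by rw [toElem_def, List.foldr_nil], rfl⟩⟩
              · unfold Branch.PP
                rw [hsr, hf1]
                exact ⟨rfl, rfl, rfl⟩
            have hs := hseg₂ ([] : List PDLProgram) γ θ (by rw [List.foldr_nil])
            exact hwait.trans_P (hstep.trans_left hs)
      -- iterate: if the goal never holds we obtain an infinitely progressing trace
      by_contra hgoal
      have hstep : ∀ s : { p : ℕ × Label // Q p.1 p.2 },
          ∃ s' : { p : ℕ × Label // Q p.1 p.2 },
            s.1.1 < s'.1.1 ∧
            B.SegP s.1.1 s'.1.1 ⟨s.1.2, [], γ, θ⟩ ⟨s'.1.2, [], γ, θ⟩ := by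
        rintro ⟨⟨k, v⟩, hq⟩
        rcases iter k v hq with hg | ⟨k', v', hq', hlt, hseg⟩
        · exact absurd hg hgoal
        · exact ⟨⟨(k', v'), hq'⟩, hlt, hseg⟩
      have hQ0 : Q n u := ⟨le_rfl, h, Relation.ReflTransGen.refl,
        fun sp δ₀ χ₀ _ => Branch.Seg.refl B n _⟩
      obtain ⟨g, hg0, hgstep⟩ := dc _ (⟨(n, u), hQ0⟩ : { p : ℕ × Label // Q p.1 p.2 }) hstep
      exact B.glue (fun k => (g k).1.1) (fun k => ⟨(g k).1.2, [], γ, θ⟩)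
        (fun k => (hgstep k).2) (fun k => (hgstep k).1)

lemma sizeF_pos : ∀ χ : PDLFormula, 0 < sizeF χ := by
  intro χ
  cases χ <;> simp [sizeF]

lemma PL (B : Branch) : ∀ (N : ℕ) (α : PDLProgram), sizeP α ≤ N → OK B (sizeP α + 1) →
    ∀ (ψ : PDLFormula) (x y : Label),
    SeqElem.lab x (PDLFormula.box α ψ) ∈ B.Gb → (x, y) ∈ PDLProgram.sem (mB B) α →
    SeqElem.lab y ψ ∈ B.Gb := by
  intro N
  induction N with
  | zero =>
      intro α hα
      exact absurd hα (by have := sizeP_pos α; omega)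
  | succ N ihN =>
  intro α hα hOK ψ x y hmem hsem
  cases α with
  | atom a => exact B.satL_boxAtom hmem hsem
  | comp α β =>
      obtain ⟨t, h1, h2⟩ := hsem
      have hγ' : sizeP α + sizeP β + 1 ≤ N + 1 := by simpa [sizeP] using hα
      have hc := B.satL_comp hmem
      have h₁ := ihN α (by have := sizeP_pos β; omega)
        (OK_mono (by simp only [sizeP]; omega) hOK) (PDLFormula.box β ψ) x t hc h1
      exact ihN β (by have := sizeP_pos α; omega)
        (OK_mono (by simp only [sizeP]; omega) hOK) ψ t y h₁ h2
  | choice α β =>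
      have hγ' : sizeP α + sizeP β + 1 ≤ N + 1 := by simpa [sizeP] using hα
      rcases hsem with h | h
      · exact ihN α (by have := sizeP_pos β; omega)
          (OK_mono (by simp only [sizeP]; omega) hOK) ψ x y (B.satL_choice hmem).1 h
      · exact ihN β (by have := sizeP_pos α; omega)
          (OK_mono (by simp only [sizeP]; omega) hOK) ψ x y (B.satL_choice hmem).2 h
  | test χ =>
      obtain ⟨heq, hx⟩ := hsem
      rcases B.satL_test hmem with hD | hG
      · exact absurd hx ((hOK χ (by simp only [sizeP]; omega)).2 x hD)
      · have : x = y := heq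
        subst this
        exact hG
  | star γ =>
      have hγ' : sizeP γ + 1 ≤ N + 1 := by simpa [sizeP] using hα
      have hsem' : Relation.ReflTransGen
          (fun s t => (s, t) ∈ PDLProgram.sem (mB B) γ) x y := hsem
      clear hsem
      have key : SeqElem.lab y (PDLFormula.box (PDLProgram.star γ) ψ) ∈ B.Gb := by
        induction hsem' with
        | refl => exact hmem
        | tail h1 h2 ih =>
            have hb := (B.satL_star ih).2
            exact ihN γ (by omega) (OK_mono (by simp only [sizeP]; omega) hOK)
              (PDLFormula.box (PDLProgram.star γ) ψ) _ _ hb h2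
      exact (B.satL_star key).1

lemma mainOK (B : Branch) : ∀ N, OK B N := by
  intro N
  induction N with
  | zero => intro χ h; omega
  | succ N ih =>
      intro χ hχ
      rcases Nat.lt_or_ge (sizeF χ) N with hlt | hge
      · exact ih χ hlt
      cases χ with
      | bot =>
          constructor
          · intro x hx
            exact (B.no_bot hx).elim
          · intro x _ hx
            exact hx
      | atom p =>
          constructor
          · intro x hx
            exact hx
          · intro x hx hs
            exact B.not_both hs hx
      | and φ ψ =>
          have hφ : sizeF φ < N := by
            have h1 := sizeF_pos ψ; simp only [sizeF] at hχ; omega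
          have hψ : sizeF ψ < N := by
            have h1 := sizeF_pos φ; simp only [sizeF] at hχ; omega
          constructor
          · intro x hx
            have := B.satL_and hx
            exact ⟨(ih φ hφ).1 x this.1, (ih ψ hψ).1 x this.2⟩
          · intro x hx hs
            rcases B.satR_and hx with h | h
            · exact (ih φ hφ).2 x h hs.1
            · exact (ih ψ hψ).2 x h hs.2
      | or φ ψ =>
          have hφ : sizeF φ < N := by
            have h1 := sizeF_pos ψ; simp only [sizeF] at hχ; omega
          have hψ : sizeF ψ < N := by
            have h1 := sizeF_pos φ; simp only [sizeF] at hχ; omega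
          constructor
          · intro x hx
            rcases B.satL_or hx with h | h
            · exact Or.inl ((ih φ hφ).1 x h)
            · exact Or.inr ((ih ψ hψ).1 x h)
          · intro x hx hs
            have h := B.satR_or hx
            rcases hs with hs | hs
            · exact (ih φ hφ).2 x h.1 hs
            · exact (ih ψ hψ).2 x h.2 hs
      | imp φ ψ =>
          have hφ : sizeF φ < N := by
            have h1 := sizeF_pos ψ; simp only [sizeF] at hχ; omega
          have hψ : sizeF ψ < N := by
            have h1 := sizeF_pos φ; simp only [sizeF] at hχ; omega
          constructor
          · intro x hx
            rcases B.satL_imp hx with h | h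
            · exact Or.inl ((ih φ hφ).2 x h)
            · exact Or.inr ((ih ψ hψ).1 x h)
          · intro x hx hs
            have h := B.satR_imp hx
            rcases hs with hs | hs
            · exact hs ((ih φ hφ).1 x h.1)
            · exact (ih ψ hψ).2 x h.2 hs
      | box α ψ =>
          have hψ : sizeF ψ < N := by
            have h1 := sizeP_pos α; simp only [sizeF] at hχ; omega
          have hα : sizeP α + 1 ≤ N := by
            have h1 := sizeF_pos ψ; simp only [sizeF] at hχ; omega
          have hOKα : OK B (sizeP α + 1) := OK_mono hα ih
          constructor
          · intro x hx
            intro t ht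
            exact (ih ψ hψ).1 t (PL B (sizeP α) α le_rfl hOKα ψ x t hx ht)
          · intro x hx hs
            obtain ⟨n, hn⟩ := hx
            obtain ⟨m, z, hm, hsem, hmem, _⟩ :=
              consume_aux B (sizeP α) α le_rfl hOKα ψ x n hn
            exact (ih ψ hψ).2 z ⟨m, hmem⟩ (hs z hsem)

lemma desc_none (D : Deriv) : ∀ (q p : List ℕ), D.node p = none → D.node (p ++ q) = none := by
  intro q
  induction q with
  | nil => intro p h; simpa using h
  | cons i q ih =>
      intro p h
      have h1 : D.node (p ++ [i]) = none := D.tree_closed p i h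
      have h2 := ih (p ++ [i]) h1
      rw [show p ++ i :: q = (p ++ [i]) ++ q by simp] 
      exact h2

lemma open_case (σ : ℕ → Label × PDLFormula) (hσ : IsSchedule σ) (S₀ : Sequent) (D : Deriv)
    (hD : IsSearchTree σ S₀ D) (p : List ℕ) (S : Sequent)
    (hnode : D.node p = some (Sum.inr S)) :
    (∀ A ∈ (↑S.ant : Set SeqElem), SeqElem.sat (templateModel ↑S.ant) (fun x => x) A) ∧
    (∀ B ∈ (↑S.suc : Set SeqElem), ¬ SeqElem.sat (templateModel ↑S.ant) (fun x => x) B) := by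
  obtain ⟨hroot, st, pend, cl, hst0, hp0, hcl0, hmain⟩ := hD
  have hopenAt : D.openAt p = some S := by unfold Deriv.openAt; rw [hnode]
  have hnotclos : ∀ q Sq, D.seqAt q = some Sq → cl q = false →
      (∃ rest, q ++ rest = p) → ¬ closable Sq := by
    rintro q Sq hseq hcl ⟨rest, hqp⟩ hc
    obtain ⟨_, hop, _⟩ := ((hmain q Sq hseq hcl).1 hc).1
    have := hop rest
    rw [hqp, hopenAt] at this
    cases this
  have hclk : ∀ k, k ≤ p.length → cl (List.take k p) = false := by
    intro k
    induction k with
    | zero => intro _; simpa using hcl0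
    | succ k ih =>
        intro hk
        have hck := ih (by omega)
        have hpref : List.take k p ++ List.drop k p = p := List.take_append_drop k p
        obtain ⟨d, hd⟩ : ∃ d, D.node (List.take k p) = some d := by
          rcases h : D.node (List.take k p) with _ | d
          · have := desc_none D (List.drop k p) _ h
            rw [hpref, hnode] at this
            cases this
          · exact ⟨d, rfl⟩
        cases d with
        | inr Sq =>
            exfalso
            have hk' : k < p.length := by omega
            have hdne : List.drop k p ≠ [] := by
              intro hcon
              have : (List.drop k p).length = p.length - k := List.length_drop
              rw [hcon] at this
              simp at this
              omega
            rcases hdrop : List.drop k p with _ | ⟨i, q'⟩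
            · exact hdne hdrop
            · have h1 : D.node (List.take k p ++ [i]) = none :=
                D.leaf_no_children _ Sq hd i
              have h2 := desc_none D q' _ h1
              rw [show (List.take k p ++ [i]) ++ q' = List.take k p ++ (i :: q') by simp] at h2
              rw [← hdrop, hpref, hnode] at h2
              cases h2
        | inl r =>
            have hseqk : D.seqAt (List.take k p) = some r.conc := by
              unfold Deriv.seqAt; rw [hd]; rfl
            have hnc := hnotclos _ _ hseqk hck ⟨List.drop k p, hpref⟩
            have hch := ((hmain _ _ hseqk hck).2 hnc).1
            have hk' : k < p.length := by omega
            have htake : List.take (k+1) p = List.take k p ++ [p[k]] := by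
              rw [List.take_succ, List.getElem?_eq_getElem hk']
              rfl
            rw [htake]
            exact hch _
  have hclp : cl p = false := by
    have := hclk p.length le_rfl
    simpa using this
  have hseqp : D.seqAt p = some S := by
    unfold Deriv.seqAt; rw [hnode]; rfl
  have hncS : ¬ closable S := hnotclos p S hseqp hclp ⟨[], by simp⟩
  have hstep := ((hmain p S hseqp hclp).2 hncS).2
  have hnosched : ∀ j, st p ≤ j → ¬ SchedApplies (σ j).1 (σ j).2 S := by
    rcases hstep with ⟨x, a, ψ, y, rest, _, _, _, _, hn, _⟩ | ⟨hpe, hrest⟩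
    · rw [hnode] at hn; simp at hn
    · rcases hrest with ⟨j, _, _, _, hbr⟩ | ⟨hns, _⟩
      · exfalso
        rcases hbr with ⟨_, r', hn, _⟩ |
          ⟨_, _, ⟨a, ψ, _, y, rest, _, _, hn, _⟩ | ⟨_, r', hn, _⟩⟩ <;>
          (rw [hnode] at hn; simp at hn)
      · exact hns
  have hnos : ∀ (x : Label) (φ : PDLFormula), φ.isNonAtomic → SchedApplies x φ S → False := by
    intro x φ hna happ'
    obtain ⟨j, hj, hσj⟩ := hσ.2 x φ hna (st p)
    refine hnosched j hj ?_
    simp only [hσj]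
    exact happ'
  constructor
  · rintro A hA
    cases A with
    | rel x a y => exact hA
    | lab x φ =>
        have hA' : SeqElem.lab x φ ∈ S.ant := hA
        cases φ with
        | bot => exact absurd (Or.inl ⟨x, hA'⟩) hncS
        | atom q => exact hA
        | and φ ψ => exact (hnos x _ nonatomic_and (Or.inr ⟨hA', trivial⟩)).elim
        | or φ ψ => exact (hnos x _ nonatomic_or (Or.inr ⟨hA', trivial⟩)).elim
        | imp φ ψ => exact (hnos x _ nonatomic_imp (Or.inr ⟨hA', trivial⟩)).elim
        | box α ψ =>
            cases α with
            | atom a =>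
                intro t ht
                exact (hnos x _ nonatomic_box (Or.inr ⟨hA', ⟨t, ht⟩⟩)).elim
            | comp α β => exact (hnos x _ nonatomic_box (Or.inr ⟨hA', trivial⟩)).elim
            | choice α β => exact (hnos x _ nonatomic_box (Or.inr ⟨hA', trivial⟩)).elim
            | test χ => exact (hnos x _ nonatomic_box (Or.inr ⟨hA', trivial⟩)).elim
            | star α => exact (hnos x _ nonatomic_box (Or.inr ⟨hA', trivial⟩)).elim
  · rintro A hA hsat
    cases A with
    | rel x a y =>
        have hsat' : SeqElem.rel x a y ∈ S.ant := hsat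
        exact hncS (Or.inr ⟨_, hsat', hA⟩)
    | lab x φ =>
        have hA' : SeqElem.lab x φ ∈ S.suc := hA
        cases φ with
        | bot => exact hsat
        | atom q =>
            have hsat' : SeqElem.lab x (PDLFormula.atom q) ∈ S.ant := hsat
            exact hncS (Or.inr ⟨_, hsat', hA'⟩)
        | and φ ψ => exact hnos x _ nonatomic_and (Or.inl hA')
        | or φ ψ => exact hnos x _ nonatomic_or (Or.inl hA')
        | imp φ ψ => exact hnos x _ nonatomic_imp (Or.inl hA')
        | box α ψ => exact hnos x _ nonatomic_box (Or.inl hA')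

theorem countermodel_construction' (σ : ℕ → Label × PDLFormula) (hσ : IsSchedule σ)
    (S₀ : Sequent) (D : Deriv) (hD : IsSearchTree σ S₀ D)
    (Γs Δs : Set SeqElem) (hT : Template D Γs Δs) :
    (∀ A ∈ Γs, SeqElem.sat (templateModel Γs) (fun x => x) A) ∧
    (∀ B ∈ Δs, ¬ SeqElem.sat (templateModel Γs) (fun x => x) B) := by
  rcases hT with ⟨p, S, hnode, hΓ, hΔ⟩ | ⟨f, hf, hnt, hΓ, hΔ⟩
  · subst hΓ; subst hΔ
    exact open_case σ hσ S₀ D hD p S hnode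
  · obtain ⟨B, hBσ, hBD, hBf, hseq⟩ := exists_branch σ hσ S₀ D hD f hf hnt
    have hΓb : Γs = B.Gb := by
      rw [hΓ]
      ext A
      constructor
      · rintro ⟨n, Sn, hSn, hA⟩
        rw [hseq n] at hSn
        exact ⟨n, (Option.some.inj hSn) ▸ hA⟩
      · rintro ⟨n, hA⟩
        exact ⟨n, B.S n, hseq n, hA⟩
    have hΔb : Δs = B.Db := by
      rw [hΔ]
      ext A
      constructor
      · rintro ⟨n, Sn, hSn, hA⟩
        rw [hseq n] at hSn
        exact ⟨n, (Option.some.inj hSn) ▸ hA⟩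
      · rintro ⟨n, hA⟩
        exact ⟨n, B.S n, hseq n, hA⟩
    constructor
    · intro A hA
      rw [hΓb] at hA ⊢
      cases A with
      | rel x a y => exact hA
      | lab x φ => exact (mainOK B (sizeF φ + 1) φ (by omega)).1 x hA
    · intro A hA hsat
      rw [hΔb] at hA
      rw [hΓb] at hsat
      cases A with
      | rel x a y => exact B.not_both hsat hA
      | lab x φ => exact (mainOK B (sizeF φ + 1) φ (by omega)).2 x hA hsat

/-- **Countermodel construction**: for every template `P = (Γ*, Δ*)` induced by a search tree,
the determined model `m_P` with the identity valuation `𝔳` satisfies `m_P, 𝔳 ⊨ A` for all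
`A ∈ Γ*` and `m_P, 𝔳 ⊭ B` for all `B ∈ Δ*`. -/
theorem countermodel_construction (σ : ℕ → Label × PDLFormula) (hσ : IsSchedule σ)
    (S₀ : Sequent) (D : Deriv) (hD : IsSearchTree σ S₀ D)
    (Γs Δs : Set SeqElem) (hT : Template D Γs Δs) :
    (∀ A ∈ Γs, SeqElem.sat (templateModel Γs) (fun x => x) A) ∧
    (∀ B ∈ Δs, ¬ SeqElem.sat (templateModel Γs) (fun x => x) B) :=
  countermodel_construction' σ hσ S₀ D hD Γs Δs hT
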